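/- arXiv:2212.04978 — 5 statements merged into one kernel-verified Lean document; each statement's English description precedes it below -/
import Mathlib

section
/- Let q be a power of the prime p, let n ≥ 1, and write n = p^e t with p ∤ t. For each divisor d of t, let o_d(q) denote the multiplicative order of q in (ℤ/dℤ)^×, and let φ denote Euler's totient function. Then the number of elements x of F_{q^n} such that x, x^q, x^{q^2}, ..., x^{q^{n-1}} are linearly independent over F_q equals q^{(p^e - 1)t} · ∏_{d ∣ t} (q^{o_d(q)} - 1)^{φ(d)/o_d(q)}. -/
open Polynomial


section Frob
variable (F K : Type*) [CommSemiring F] [CommRing K] [Algebra F K] (q : ℕ)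

/-- The `q`-power map as an `F`-linear map, given the freshman's dream and that it fixes `F`. -/
noncomputable def frobLin (hadd : ∀ x y : K, (x + y) ^ q = x ^ q + y ^ q)
    (hF : ∀ c : F, (algebraMap F K c) ^ q = algebraMap F K c) : K →ₗ[F] K where
  toFun x := x ^ q
  map_add' x y := hadd x y
  map_smul' c x := by
    simp only [Algebra.smul_def, mul_pow, hF, RingHom.id_apply]

variable {F K q}

theorem frobLin_apply (hadd) (hF) (x : K) : frobLin F K q hadd hF x = x ^ q := rfl

theorem frobLin_pow_apply (hadd) (hF) (i : ℕ) (x : K) :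
    ((frobLin F K q hadd hF) ^ i) x = x ^ q ^ i := by
  induction i with
  | zero => simp
  | succ i ih =>
    rw [pow_succ', Module.End.mul_apply, ih, frobLin_apply, ← pow_mul, ← pow_succ]

theorem aeval_frobLin_apply (hadd) (hF) (g : F[X]) (x : K) :
    (aeval (frobLin F K q hadd hF) g) x
      = ∑ i ∈ Finset.range (g.natDegree + 1), g.coeff i • x ^ q ^ i := by
  rw [Polynomial.aeval_eq_sum_range]
  rw [LinearMap.sum_apply]
  refine Finset.sum_congr rfl fun i _ => ?_
  rw [LinearMap.smul_apply, frobLin_pow_apply]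
end Frob

section Ker
variable {F K : Type*} [Field F] [Fintype F] [Field K] [Algebra F K] [Fintype K]
variable (hadd : ∀ x y : K, (x + y) ^ Fintype.card F = x ^ Fintype.card F + y ^ Fintype.card F)
variable (hF : ∀ c : F, (algebraMap F K c) ^ Fintype.card F = algebraMap F K c)

theorem card_ker_le (g : F[X]) (hg : g ≠ 0) :
    Nat.card ↥(LinearMap.ker (aeval (frobLin F K (Fintype.card F) hadd hF) g))
      ≤ Fintype.card F ^ g.natDegree := by
  classical
  set q := Fintype.card F with hq
  have hq2 : 1 < q := Fintype.one_lt_card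
  set σ := frobLin F K q hadd hF with hσ
  set G : K[X] := ∑ i ∈ Finset.range (g.natDegree + 1),
      C (algebraMap F K (g.coeff i)) * X ^ (q ^ i) with hG
  have hGdeg : G.natDegree ≤ q ^ g.natDegree := by
    refine Polynomial.natDegree_sum_le_of_forall_le _ _ fun i hi => ?_
    refine le_trans (natDegree_C_mul_le _ _) ?_
    rw [natDegree_X_pow]
    exact Nat.pow_le_pow_right (le_of_lt (by omega)) (Nat.lt_succ_iff.mp (Finset.mem_range.mp hi))
  have hGcoeff : G.coeff (q ^ g.natDegree) = algebraMap F K g.leadingCoeff := by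
    rw [hG, Polynomial.finset_sum_coeff]
    rw [Finset.sum_eq_single g.natDegree]
    · simp [coeff_X_pow]
    · intro i hi hne
      simp only [coeff_C_mul, coeff_X_pow]
      rw [if_neg, mul_zero]
      exact fun hcon => hne (Nat.pow_right_injective hq2 hcon.symm)
    · intro h; exact absurd (Finset.self_mem_range_succ _) h
  have hGne : G ≠ 0 := fun hcon => by
    rw [hcon, coeff_zero] at hGcoeff
    exact (leadingCoeff_ne_zero.mpr hg)
      ((map_eq_zero_iff _ (algebraMap F K).injective).mp hGcoeff.symm)
  have hroot : ∀ x : K, x ∈ LinearMap.ker (aeval σ g) → x ∈ G.roots.toFinset := by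
    intro x hx
    rw [Multiset.mem_toFinset, mem_roots hGne]
    rw [LinearMap.mem_ker] at hx
    have : G.eval x = (aeval σ g) x := by
      rw [aeval_frobLin_apply, hG, Polynomial.eval_finset_sum]
      refine Finset.sum_congr rfl fun i _ => ?_
      rw [eval_mul, eval_C, eval_pow, eval_X, Algebra.smul_def]
    exact this.trans hx
  calc Nat.card ↥(LinearMap.ker (aeval σ g))
      ≤ Nat.card {y : K // y ∈ G.roots.toFinset} := by
        refine Nat.card_le_card_of_injective (fun x => ⟨x.1, hroot x.1 x.2⟩) ?_
        intro a b hab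
        exact Subtype.ext (by simpa using congrArg Subtype.val hab)
    _ = G.roots.toFinset.card := by
        rw [Nat.card_eq_fintype_card, Fintype.card_coe]
    _ ≤ q ^ g.natDegree :=
        le_trans (le_trans (Multiset.toFinset_card_le _) (Polynomial.card_roots' G)) hGdeg

theorem card_ker_eq {n : ℕ} (hcard : Fintype.card K = Fintype.card F ^ n)
    {g h : F[X]} (hg : g.Monic) (hh : h.Monic) (hgh : g * h = X ^ n - 1) :
    Nat.card ↥(LinearMap.ker (aeval (frobLin F K (Fintype.card F) hadd hF) g))
      = Fintype.card F ^ g.natDegree := by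
  classical
  set q := Fintype.card F with hq
  have hq2 : 1 < q := Fintype.one_lt_card
  set σ := frobLin F K q hadd hF with hσ
  have hn0 : 0 < n := by
    by_contra hcon
    push_neg at hcon
    interval_cases n
    exact absurd hcard (by simpa using (Fintype.one_lt_card (α := K)).ne')
  have hNdeg : (X ^ n - 1 : F[X]).natDegree = n := by
    simpa using Polynomial.natDegree_X_pow_sub_C (n := n) (r := (1 : F))
  have hdegs : g.natDegree + h.natDegree = n := by
    rw [← Polynomial.natDegree_mul hg.ne_zero hh.ne_zero, hgh, hNdeg]
  haveI : FiniteDimensional F K := FiniteDimensional.of_finrank_pos (by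
    by_contra hcon
    push_neg at hcon
    interval_cases h : Module.finrank F K
    · have := Module.card_eq_pow_finrank (K := F) (V := K)
      rw [h, pow_zero] at this
      exact absurd this (Fintype.one_lt_card (α := K)).ne')
  have hrank : Module.finrank F K = n := by
    have := Module.card_eq_pow_finrank (K := F) (V := K)
    rw [hcard] at this
    exact (Nat.pow_right_injective hq2 this.symm)
  -- `aeval σ (X^n - 1) = 0`
  have hN : ∀ x : K, (aeval σ (X ^ n - 1 : F[X])) x = 0 := by
    intro x
    rw [map_sub, map_pow, aeval_X, map_one, LinearMap.sub_apply, Module.End.one_apply,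
      frobLin_pow_apply, ← hcard, FiniteField.pow_card, sub_self]
  have hrange : LinearMap.range (aeval σ h) ≤ LinearMap.ker (aeval σ g) := by
    rintro y ⟨x, rfl⟩
    rw [LinearMap.mem_ker, ← Module.End.mul_apply, ← map_mul, hgh, hN]
  -- cardinalities of kernels as powers of q via finrank
  have cardsub : ∀ W : Submodule F K, Nat.card ↥W = q ^ Module.finrank F W := by
    intro W
    rw [Nat.card_eq_fintype_card]
    exact Module.card_eq_pow_finrank
  have hkerle : ∀ (u : F[X]), u.Monic → Module.finrank F ↥(LinearMap.ker (aeval σ u)) ≤ u.natDegree := by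
    intro u hu
    have := card_ker_le hadd hF u hu.ne_zero
    rw [cardsub] at this
    exact (Nat.pow_le_pow_iff_right hq2).mp this
  have hrn := LinearMap.finrank_range_add_finrank_ker (aeval σ h)
  rw [hrank] at hrn
  have h1 : Module.finrank F ↥(LinearMap.range (aeval σ h)) ≥ g.natDegree := by
    have := hkerle h hh
    omega
  have h2 : Module.finrank F ↥(LinearMap.ker (aeval σ g)) ≥ g.natDegree :=
    le_trans h1 (Submodule.finrank_mono hrange)
  have h3 : Module.finrank F ↥(LinearMap.ker (aeval σ g)) = g.natDegree :=
    le_antisymm (hkerle g hg) h2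
  rw [cardsub, h3]
end Ker

universe u

section Core
variable {F : Type*} [Field F] [Fintype F]

/-- coe of restricted power -/
theorem restrict_pow_coe {V : Type u} [AddCommGroup V] [Module F V]
    (σ : V →ₗ[F] V) (U : Submodule F V) (hU : ∀ x ∈ U, σ x ∈ U) (n : ℕ) (x : U) :
    (((σ.restrict hU) ^ n) x : V) = (σ ^ n) (x : V) := by
  induction n with
  | zero => simp
  | succ n ih =>
    rw [pow_succ', pow_succ', Module.End.mul_apply, Module.End.mul_apply,
      LinearMap.restrict_coe_apply, ih]

theorem aeval_restrict_coe {V : Type u} [AddCommGroup V] [Module F V]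
    (σ : V →ₗ[F] V) (U : Submodule F V) (hU : ∀ x ∈ U, σ x ∈ U) (g : F[X]) (x : U) :
    ((aeval (σ.restrict hU) g x : U) : V) = (aeval σ g) (x : V) := by
  induction g using Polynomial.induction_on' with
  | add g h ihg ihh => simp [map_add, ihg, ihh]
  | monomial n c =>
    rw [← C_mul_X_pow_eq_monomial, map_mul, map_mul, aeval_C, aeval_C, aeval_X_pow, aeval_X_pow]
    simp only [Module.End.mul_apply, Module.algebraMap_end_apply, LinearMap.map_smul,
      Submodule.coe_smul]
    rw [restrict_pow_coe]

theorem commute_aeval {V : Type u} [AddCommGroup V] [Module F V]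
    (σ : V →ₗ[F] V) (g : F[X]) : σ * (aeval σ g) = (aeval σ g) * σ := by
  have h1 : σ * aeval σ g = aeval σ (X * g) := by rw [map_mul, aeval_X]
  have h2 : aeval σ g * σ = aeval σ (g * X) := by rw [map_mul, aeval_X]
  rw [h1, h2, mul_comm]

theorem core_count [DecidableEq F[X]] (a : ℕ) (ha : 0 < a) (s : Finset F[X]) :
    ∀ (V : Type u) (_ : AddCommGroup V), ∀ (_ : Module F V) (_ : Fintype V)
    (σ : V →ₗ[F] V),
    (∀ f ∈ s, f.Monic ∧ Irreducible f) →
    (∀ g : F[X], g.Monic → g ∣ ∏ f ∈ s, f ^ a →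
      Nat.card ↥(LinearMap.ker (aeval σ g)) = Fintype.card F ^ g.natDegree) →
    (Fintype.card V = Fintype.card F ^ (∏ f ∈ s, f ^ a).natDegree) →
    Nat.card {x : V // ∀ f ∈ s, (aeval σ (f ^ (a - 1) * ∏ g ∈ s.erase f, g ^ a)) x ≠ 0}
      = ∏ f ∈ s, (Fintype.card F ^ (a * f.natDegree)
          - Fintype.card F ^ ((a - 1) * f.natDegree)) := by
  classical
  induction s using Finset.induction_on with
  | empty =>
    intro V _ _ _ σ _ _ hV
    simp only [Finset.notMem_empty, false_implies, implies_true, Finset.prod_empty] at *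
    calc Nat.card {x : V // True} = Nat.card V :=
          Nat.card_congr (Equiv.subtypeUnivEquiv fun _ => trivial)
      _ = 1 := by rw [Nat.card_eq_fintype_card, hV, natDegree_one, pow_zero]
  | @insert f s₀ hf ih =>
    intro V _ _ _ σ hs H hV
    set q := Fintype.card F with hq
    have hmf : f.Monic := (hs f (Finset.mem_insert_self f s₀)).1
    have hif : Irreducible f := (hs f (Finset.mem_insert_self f s₀)).2
    have hs₀ : ∀ g ∈ s₀, g.Monic ∧ Irreducible g :=
      fun g hg => hs g (Finset.mem_insert_of_mem hg)
    set R : F[X] := ∏ g ∈ s₀, g ^ a with hR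
    have hmR : R.Monic := monic_prod_of_monic _ _ fun g hg => ((hs₀ g hg).1).pow a
    set N : F[X] := ∏ g ∈ insert f s₀, g ^ a with hN
    have hNfR : N = f ^ a * R := Finset.prod_insert hf
    have hmN : N.Monic := monic_prod_of_monic _ _ fun g hg =>
      ((hs g hg).1).pow a
    -- coprimality
    have hfndvd : ¬ f ∣ R := by
      intro hdvd
      have hprime : Prime f := hif.prime
      obtain ⟨g, hg, hfg⟩ := hprime.exists_mem_finset_dvd hdvd
      have : f ∣ g := hprime.dvd_of_dvd_pow hfg
      have : f = g := eq_of_monic_of_associated hmf ((hs₀ g hg).1)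
        (hif.associated_of_dvd ((hs₀ g hg).2) this)
      exact hf (this ▸ hg)
    have hcop : IsCoprime (f ^ a) R := (hif.coprime_iff_not_dvd.mpr hfndvd).pow_left
    obtain ⟨u, v, huv⟩ := hcop
    -- N kills everything
    have hNtop : ∀ x : V, aeval σ N x = 0 := by
      have hcard := H N hmN dvd_rfl
      have : LinearMap.ker (aeval σ N) = ⊤ := by
        have h1 : Nat.card ↥(LinearMap.ker (aeval σ N)) = Nat.card V := by
          rw [hcard, Nat.card_eq_fintype_card, hV]
        have h2 : (LinearMap.ker (aeval σ N) : Set V).ncard = (Set.univ : Set V).ncard := by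
          rw [Set.ncard_univ, ← Nat.card_coe_set_eq]; exact h1
        have := Set.eq_of_subset_of_ncard_le (Set.subset_univ _)
          (le_of_eq h2.symm) (Set.finite_univ)
        exact SetLike.coe_injective (by rw [this, Submodule.top_coe])
      intro x
      exact LinearMap.mem_ker.mp (this ▸ Submodule.mem_top)
    set W := LinearMap.ker (aeval σ (f ^ a)) with hW
    set U := LinearMap.ker (aeval σ R) with hU
    -- decomposition
    have hdisj : Disjoint W U := by
      rw [Submodule.disjoint_def]
      intro x hxW hxU
      have : aeval σ (1 : F[X]) x = 0 := by
        rw [← huv, map_add, map_mul, map_mul, LinearMap.add_apply,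
          Module.End.mul_apply, Module.End.mul_apply, LinearMap.mem_ker.mp hxW,
          LinearMap.mem_ker.mp hxU, map_zero, map_zero, add_zero]
      simpa using this
    have hdecomp : ∀ x : V, aeval σ (v * R) x ∈ W ∧ aeval σ (u * f ^ a) x ∈ U ∧
        x = aeval σ (v * R) x + aeval σ (u * f ^ a) x := by
      intro x
      refine ⟨?_, ?_, ?_⟩
      · rw [hW, LinearMap.mem_ker, ← Module.End.mul_apply, ← map_mul]
        have : f ^ a * (v * R) = v * N := by rw [hNfR]; ring
        rw [this, map_mul, Module.End.mul_apply, hNtop, map_zero]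
      · rw [hU, LinearMap.mem_ker, ← Module.End.mul_apply, ← map_mul]
        have : R * (u * f ^ a) = u * N := by rw [hNfR]; ring
        rw [this, map_mul, Module.End.mul_apply, hNtop, map_zero]
      · have : aeval σ (v * R) x + aeval σ (u * f ^ a) x = aeval σ (1 : F[X]) x := by
          rw [← huv, map_add, LinearMap.add_apply, add_comm]
        rw [this]; simp
    have hcompl : IsCompl W U := by
      refine ⟨hdisj, codisjoint_iff.mpr (eq_top_iff.mpr fun x _ => ?_)⟩
      obtain ⟨h1, h2, h3⟩ := hdecomp x
      exact h3 ▸ Submodule.add_mem_sup h1 h2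
    -- injectivity on components
    have hinjU : ∀ x : V, x ∈ U → aeval σ (f ^ a) x = 0 → x = 0 := by
      intro x hxU hx
      exact Submodule.disjoint_def.mp hdisj x (LinearMap.mem_ker.mpr hx) hxU
    have hinjW : ∀ x : V, x ∈ W → aeval σ R x = 0 → x = 0 := by
      intro x hxW hx
      exact Submodule.disjoint_def.mp hdisj x hxW (LinearMap.mem_ker.mpr hx)
    have hmulapply : ∀ (A B : F[X]) (x : V), aeval σ (A * B) x = aeval σ A (aeval σ B x) := by
      intro A B x; rw [map_mul, Module.End.mul_apply]
    have hRdvdN : R ∣ N := ⟨f ^ a, by rw [hNfR, mul_comm]⟩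
    -- U is invariant under σ
    have hUinv : ∀ x ∈ U, σ x ∈ U := by
      intro x hx
      rw [hU, LinearMap.mem_ker, ← Module.End.mul_apply, ← commute_aeval,
        Module.End.mul_apply, LinearMap.mem_ker.mp hx, map_zero]
    set σ' := σ.restrict hUinv with hσ'
    have hkerU : ∀ g : F[X], g ∣ R → ∀ x : V, aeval σ g x = 0 → x ∈ U := by
      rintro g ⟨c, hc⟩ x hx
      rw [hU, LinearMap.mem_ker, hc, mul_comm, hmulapply, hx, map_zero]
    -- kernels of restricted map
    have Hres : ∀ g : F[X], g.Monic → g ∣ R →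
        Nat.card ↥(LinearMap.ker (aeval σ' g)) = q ^ g.natDegree := by
      intro g hmg hgR
      have e : ↥(LinearMap.ker (aeval σ' g)) ≃ ↥(LinearMap.ker (aeval σ g)) := by
        have hto : ∀ w : ↥(LinearMap.ker (aeval σ' g)), ((w.1 : U) : V) ∈ LinearMap.ker (aeval σ g) := by
          intro w
          rw [LinearMap.mem_ker, ← aeval_restrict_coe σ U hUinv g w.1,
            LinearMap.mem_ker.mp w.2, ZeroMemClass.coe_zero]
        have hinvmem : ∀ x : ↥(LinearMap.ker (aeval σ g)),
            (⟨(x : V), hkerU g hgR x (LinearMap.mem_ker.mp x.2)⟩ : U) ∈ LinearMap.ker (aeval σ' g) := by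
          intro x
          rw [LinearMap.mem_ker]
          have : ((aeval σ' g ⟨(x : V), hkerU g hgR x (LinearMap.mem_ker.mp x.2)⟩ : U) : V) = 0 := by
            rw [aeval_restrict_coe σ U hUinv g]
            exact LinearMap.mem_ker.mp x.2
          exact Subtype.ext this
        exact { toFun := fun w => ⟨((w.1 : U) : V), hto w⟩
                invFun := fun x => ⟨⟨(x : V), hkerU g hgR x (LinearMap.mem_ker.mp x.2)⟩, hinvmem x⟩
                left_inv := fun w => by apply Subtype.ext; apply Subtype.ext; rfl
                right_inv := fun x => by apply Subtype.ext; rfl }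
      rw [Nat.card_congr e]
      exact H g hmg (hgR.trans hRdvdN)
    have hUcard : Fintype.card ↥U = q ^ R.natDegree := by
      rw [← Nat.card_eq_fintype_card]
      exact H R hmR hRdvdN
    have IH := ih ↥U _ _ _ σ' hs₀ Hres hUcard
    -- the subtracted counting on W
    have hWcard : Nat.card ↥W = q ^ (a * f.natDegree) := by
      rw [hW, H (f ^ a) (hmf.pow a) (hNfR ▸ dvd_mul_right _ _), natDegree_pow]
    have hfsub : f ^ a = f * f ^ (a - 1) := by
      conv_lhs => rw [← Nat.succ_pred_eq_of_pos ha]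
      rw [pow_succ']
      rfl
    have hsubW : ∀ x : V, aeval σ (f ^ (a - 1)) x = 0 → x ∈ W := by
      intro x hx
      rw [hW, LinearMap.mem_ker, hfsub, hmulapply, hx, map_zero]
    have cardA : Nat.card {w : ↥W // aeval σ (f ^ (a - 1)) (w : V) = 0}
        = q ^ ((a - 1) * f.natDegree) := by
      have e : {w : ↥W // aeval σ (f ^ (a - 1)) (w : V) = 0}
          ≃ ↥(LinearMap.ker (aeval σ (f ^ (a - 1)))) :=
        { toFun := fun w => ⟨(w.1 : V), LinearMap.mem_ker.mpr w.2⟩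
          invFun := fun x => ⟨⟨(x : V), hsubW x (LinearMap.mem_ker.mp x.2)⟩, LinearMap.mem_ker.mp x.2⟩
          left_inv := fun w => by apply Subtype.ext; apply Subtype.ext; rfl
          right_inv := fun x => by apply Subtype.ext; rfl }
      rw [Nat.card_congr e,
        H (f ^ (a - 1)) (hmf.pow _) (((pow_dvd_pow f (Nat.sub_le a 1)).trans (hNfR ▸ dvd_mul_right _ _))),
        natDegree_pow]
    have factor1 : Nat.card {w : ↥W // aeval σ (f ^ (a - 1)) (w : V) ≠ 0}
        = q ^ (a * f.natDegree) - q ^ ((a - 1) * f.natDegree) := by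
      have := Fintype.card_subtype_compl (fun w : ↥W => aeval σ (f ^ (a - 1)) (w : V) = 0)
      simp only [← Nat.card_eq_fintype_card] at this
      rw [this, cardA, ← hWcard]
    -- the equivalence of counting problems
    set e := Submodule.prodEquivOfIsCompl W U hcompl with he
    have hItermf : ∀ (w : ↥W) (u : ↥U),
        aeval σ (f ^ (a - 1) * ∏ h ∈ (insert f s₀).erase f, h ^ a) ((w : V) + (u : V)) ≠ 0
          ↔ aeval σ (f ^ (a - 1)) (w : V) ≠ 0 := by
      intro w u
      rw [Finset.erase_insert hf, map_add]
      have hu0 : aeval σ (f ^ (a - 1) * R) (u : V) = 0 := by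
        rw [hmulapply, LinearMap.mem_ker.mp u.2, map_zero]
      have hyW : aeval σ (f ^ (a - 1)) (w : V) ∈ W := by
        refine LinearMap.mem_ker.mpr ?_
        rw [← hmulapply, mul_comm (f ^ a) (f ^ (a - 1)), hmulapply,
          LinearMap.mem_ker.mp w.2, map_zero]
      rw [hu0, add_zero, mul_comm (f ^ (a - 1)) R, hmulapply]
      constructor
      · intro h hy; exact h (by rw [hy, map_zero])
      · intro hy h; exact hy (hinjW _ hyW h)
    have hItermg : ∀ g ∈ s₀, ∀ (w : ↥W) (u : ↥U),
        aeval σ (g ^ (a - 1) * ∏ h ∈ (insert f s₀).erase g, h ^ a) ((w : V) + (u : V)) ≠ 0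
          ↔ aeval σ' (g ^ (a - 1) * ∏ h ∈ s₀.erase g, h ^ a) u ≠ 0 := by
      intro g hg w u
      have hfg : f ≠ g := fun hcon => hf (hcon ▸ hg)
      have herase : (insert f s₀).erase g = insert f (s₀.erase g) :=
        Finset.erase_insert_of_ne hfg
      have hfnotin : f ∉ s₀.erase g := fun hcon => hf (Finset.mem_of_mem_erase hcon)
      set T := ∏ h ∈ s₀.erase g, h ^ a with hT
      set Q := g ^ (a - 1) * T with hQ
      have hpoly : g ^ (a - 1) * ∏ h ∈ (insert f s₀).erase g, h ^ a = f ^ a * Q := by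
        rw [herase, Finset.prod_insert hfnotin, hQ]; ring
      rw [hpoly, map_add]
      have hw0 : aeval σ (f ^ a * Q) (w : V) = 0 := by
        rw [mul_comm, hmulapply, LinearMap.mem_ker.mp w.2, map_zero]
      rw [hw0, zero_add, hmulapply]
      have hzU : aeval σ Q (u : V) ∈ U := by
        refine LinearMap.mem_ker.mpr ?_
        rw [← hmulapply, mul_comm R Q, hmulapply,
          LinearMap.mem_ker.mp u.2, map_zero]
      have hcoe : ((aeval σ' Q u : U) : V) = aeval σ Q (u : V) :=
        aeval_restrict_coe σ U hUinv Q u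
      have h1 : aeval σ (f ^ a) (aeval σ Q (u : V)) ≠ 0 ↔ aeval σ Q (u : V) ≠ 0 := by
        constructor
        · intro h hz; exact h (by rw [hz, map_zero])
        · intro hz h; exact hz (hinjU _ hzU h)
      rw [h1, ← hcoe, ne_eq, ZeroMemClass.coe_eq_zero]
    have keyiff : ∀ y : ↥W × ↥U,
        ((aeval σ (f ^ (a - 1)) ((y.1 : V)) ≠ 0) ∧
          (∀ g ∈ s₀, aeval σ' (g ^ (a - 1) * ∏ h ∈ s₀.erase g, h ^ a) y.2 ≠ 0))
          ↔ (∀ g ∈ insert f s₀,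
              aeval σ (g ^ (a - 1) * ∏ h ∈ (insert f s₀).erase g, h ^ a) (e y) ≠ 0) := by
      intro y
      have hey : (e y : V) = (y.1 : V) + (y.2 : V) :=
        Submodule.coe_prodEquivOfIsCompl' W U hcompl y
      rw [hey, Finset.forall_mem_insert]
      exact and_congr (hItermf y.1 y.2).symm
        (forall₂_congr fun g hg => (hItermg g hg y.1 y.2).symm)
    have bigequiv : {x : V // ∀ g ∈ insert f s₀,
          aeval σ (g ^ (a - 1) * ∏ h ∈ (insert f s₀).erase g, h ^ a) x ≠ 0} ≃
        {w : ↥W // aeval σ (f ^ (a - 1)) (w : V) ≠ 0} ×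
        {u : ↥U // ∀ g ∈ s₀, aeval σ' (g ^ (a - 1) * ∏ h ∈ s₀.erase g, h ^ a) u ≠ 0} :=
      Equiv.trans (Equiv.subtypeEquiv e.toEquiv keyiff).symm (Equiv.subtypeProdEquivProd)
    rw [Nat.card_congr bigequiv, Nat.card_prod, factor1, IH, Finset.prod_insert hf]
end Core

theorem natDegree_factor_cyclotomic (F : Type*) [Field F] [Fintype F] [DecidableEq F] (p : ℕ) (hp : p.Prime)
    [CharP F p] (d : ℕ) (hd : 0 < d) (hpd : ¬ p ∣ d) (h : F[X])
    (hh : h ∈ UniqueFactorizationMonoid.normalizedFactors (cyclotomic d F)) :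
    h.natDegree = orderOf ((Fintype.card F : ZMod d)) := by
  classical
  haveI : Fact p.Prime := ⟨hp⟩
  haveI : NeZero d := ⟨hd.ne'⟩
  set q := Fintype.card F with hq
  have hq2 : 1 < q := Fintype.one_lt_card
  obtain ⟨k, -, hqpk⟩ := FiniteField.card F p
  -- the order `o`
  have hcop : Nat.Coprime q d := by
    rw [hq, hqpk]
    exact Nat.Coprime.pow_left _ (hp.coprime_iff_not_dvd.mpr hpd)
  set o := orderOf ((q : ZMod d)) with ho
  have ho1 : 1 ≤ o := by
    have : ((ZMod.unitOfCoprime q hcop : (ZMod d)ˣ) : ZMod d) = (q : ZMod d) :=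
      ZMod.coe_unitOfCoprime q hcop
    rw [ho, ← this, orderOf_units]
    exact orderOf_pos _
  have hoq : d ∣ q ^ o - 1 := by
    have h1 : ((q : ZMod d)) ^ o = 1 := pow_orderOf_eq_one _
    have h2 : ((q ^ o - 1 : ℕ) : ZMod d) = 0 := by
      rw [Nat.cast_sub (Nat.one_le_pow _ _ (by omega)), Nat.cast_pow, Nat.cast_one, h1, sub_self]
    exact (ZMod.natCast_eq_zero_iff _ _).mp h2
  -- set up the field L
  have hirr : Irreducible h := UniqueFactorizationMonoid.irreducible_of_normalized_factor _ hh
  have hdvd : h ∣ cyclotomic d F := UniqueFactorizationMonoid.dvd_of_mem_normalizedFactors hh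
  haveI : Fact (Irreducible h) := ⟨hirr⟩
  set L := AdjoinRoot h with hL
  haveI : Module.Finite F L := Module.Finite.of_basis (AdjoinRoot.powerBasis hirr.ne_zero).basis
  haveI : Finite L := Module.finite_of_finite F
  haveI fintL : Fintype L := Fintype.ofFinite L
  haveI : CharP L p := charP_of_injective_algebraMap (algebraMap F L).injective p
  have hfinrank : Module.finrank F L = h.natDegree := by
    rw [PowerBasis.finrank (AdjoinRoot.powerBasis hirr.ne_zero), AdjoinRoot.powerBasis_dim]
  have hcardL : Fintype.card L = q ^ h.natDegree := by
    rw [Module.card_eq_pow_finrank (K := F) (V := L), hfinrank]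
  set α := AdjoinRoot.root h with hα
  have hαcyc : aeval α (cyclotomic d F) = 0 := by
    obtain ⟨c, hc⟩ := hdvd
    rw [hc, map_mul]
    have : aeval α h = 0 := by
      rw [aeval_def, AdjoinRoot.algebraMap_eq]
      exact AdjoinRoot.eval₂_root h
    rw [this, zero_mul]
  haveI : NeZero ((d : L)) := ⟨by
    rw [Ne, CharP.cast_eq_zero_iff L p d]
    exact hpd⟩
  have hroot : IsRoot (cyclotomic d L) α := by
    rw [← map_cyclotomic d (algebraMap F L), IsRoot, eval_map, ← aeval_def, hαcyc]
  have hprim : IsPrimitiveRoot α d := isRoot_cyclotomic_iff.mp hroot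
  have horder : d = orderOf α := hprim.eq_orderOf
  have hα0 : α ≠ 0 := by
    intro hcon
    have := hprim.pow_eq_one
    rw [hcon, zero_pow hd.ne'] at this
    exact zero_ne_one this
  -- o divides natDegree h
  have hdvd1 : o ∣ h.natDegree := by
    have h1 : α ^ (q ^ h.natDegree) = α := by rw [← hcardL]; exact FiniteField.pow_card α
    have h2 : α ^ (q ^ h.natDegree - 1) = 1 := by
      have h3 : α ^ (q ^ h.natDegree - 1) * α = 1 * α := by
        rw [one_mul, ← pow_succ, Nat.sub_add_cancel (Nat.one_le_pow _ _ (by omega)), h1]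
      exact mul_right_cancel₀ hα0 h3
    have h4 : d ∣ q ^ h.natDegree - 1 := horder ▸ orderOf_dvd_of_pow_eq_one h2
    have h5 : ((q ^ h.natDegree - 1 : ℕ) : ZMod d) = 0 :=
      (ZMod.natCast_eq_zero_iff _ _).mpr h4
    rw [Nat.cast_sub (Nat.one_le_pow _ _ (by omega)), Nat.cast_pow, Nat.cast_one,
      sub_eq_zero] at h5
    exact orderOf_dvd_of_pow_eq_one h5
  -- natDegree h ≤ o
  have hle : h.natDegree ≤ o := by
    have hαo : α ^ (q ^ o) = α := by
      have h1 : α ^ (q ^ o - 1) = 1 :=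
        orderOf_dvd_iff_pow_eq_one.mp (horder ▸ hoq)
      calc α ^ (q ^ o) = α ^ (q ^ o - 1) * α := by
            rw [← pow_succ, Nat.sub_add_cancel (Nat.one_le_pow _ _ (by omega))]
        _ = α := by rw [h1, one_mul]
    -- every element of L is fixed by x ↦ x ^ (q ^ o)
    have hfix : ∀ x : L, x ^ (q ^ o) = x := by
      have hqo : q ^ o = p ^ (k * o) := by rw [pow_mul, ← hqpk]
      set φ : L →ₐ[F] L :=
        { toRingHom := iterateFrobenius L p (k * o)
          commutes' := fun c => by
            show iterateFrobenius L p (↑k * o) ((algebraMap F L) c) = _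
            rw [iterateFrobenius_def, ← map_pow, ← hqo]
            congr 1
            exact FiniteField.pow_card_pow o c } with hφ
      have hφα : φ α = α := by
        show iterateFrobenius L p (k * o) α = α
        rw [iterateFrobenius_def, ← hqo, hαo]
      have hid : φ = AlgHom.id F L := AdjoinRoot.algHom_ext hφα
      intro x
      have h2 : φ x = x := by rw [hid]; rfl
      calc x ^ (q ^ o) = iterateFrobenius L p (↑k * o) x := by
            rw [iterateFrobenius_def, ← hqo]
        _ = x := h2
    have hqo2 : 1 < q ^ o := Nat.one_lt_pow (by omega) hq2
    set Ψ : L[X] := X ^ (q ^ o) - X with hΨ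
    have hΨdeg : Ψ.natDegree = q ^ o := FiniteField.X_pow_card_sub_X_natDegree_eq L hqo2
    have hΨne : Ψ ≠ 0 := fun hcon => by
      rw [hcon, natDegree_zero] at hΨdeg; omega
    have hsub : (Finset.univ : Finset L) ⊆ Ψ.roots.toFinset := by
      intro x _
      rw [Multiset.mem_toFinset, mem_roots hΨne, IsRoot, hΨ, eval_sub, eval_pow, eval_X,
        hfix x, sub_self]
    calc h.natDegree ≤ h.natDegree := le_rfl
      _ ≤ o := by
        have hcards : Fintype.card L ≤ q ^ o := by
          calc Fintype.card L = (Finset.univ : Finset L).card := rfl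
            _ ≤ Ψ.roots.toFinset.card := Finset.card_le_card hsub
            _ ≤ Multiset.card Ψ.roots := Multiset.toFinset_card_le _
            _ ≤ Ψ.natDegree := Polynomial.card_roots' Ψ
            _ = q ^ o := hΨdeg
        rw [hcardL] at hcards
        exact (Nat.pow_le_pow_iff_right hq2).mp hcards
  exact le_antisymm hle (Nat.le_of_dvd hirr.natDegree_pos hdvd1)

theorem normalizedFactors_finset_prod {α ι : Type*} [CommMonoidWithZero α] [Nontrivial α]
    [NormalizationMonoid α] [UniqueFactorizationMonoid α] (s : Finset ι) (f : ι → α)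
    (hf : ∀ i ∈ s, f i ≠ 0) :
    UniqueFactorizationMonoid.normalizedFactors (∏ i ∈ s, f i)
      = ∑ i ∈ s, UniqueFactorizationMonoid.normalizedFactors (f i) := by
  classical
  induction s using Finset.induction_on with
  | empty => simp [UniqueFactorizationMonoid.normalizedFactors_one]
  | @insert a s₀ ha ih =>
    rw [Finset.prod_insert ha, Finset.sum_insert ha,
      UniqueFactorizationMonoid.normalizedFactors_mul (hf a (Finset.mem_insert_self a s₀))
        (Finset.prod_ne_zero_iff.mpr fun i hi => hf i (Finset.mem_insert_of_mem hi)),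
      ih (fun i hi => hf i (Finset.mem_insert_of_mem hi))]

theorem multiset_prod_map_sum {ι β γ : Type*} [CommMonoid γ] (s : Finset ι)
    (A : ι → Multiset β) (g : β → γ) :
    (((∑ i ∈ s, A i)).map g).prod = ∏ i ∈ s, ((A i).map g).prod := by
  classical
  induction s using Finset.induction_on with
  | empty => simp
  | @insert a s₀ ha ih =>
    rw [Finset.sum_insert ha, Finset.prod_insert ha, Multiset.map_add, Multiset.prod_add, ih]

theorem orderOf_cast_pos (q d : ℕ) [NeZero d] (hcop : Nat.Coprime q d) :
    0 < orderOf ((q : ZMod d)) := by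
  have : ((ZMod.unitOfCoprime q hcop : (ZMod d)ˣ) : ZMod d) = (q : ZMod d) :=
    ZMod.coe_unitOfCoprime q hcop
  rw [← this, orderOf_units]
  exact orderOf_pos _

/-- Let q be a power of the prime p, n = p^e t with p ∤ t. The number of x ∈ F_{q^n}
whose conjugates x, x^q, ..., x^{q^{n-1}} are linearly independent over F_q equals
q^{(p^e-1)t} ∏_{d ∣ t} (q^{o_d(q)} - 1)^{φ(d)/o_d(q)}. -/
theorem stmt13 (p e t n : ℕ) (hp : p.Prime) (hpt : ¬ p ∣ t) (ht : 0 < t)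
    (hn : n = p ^ e * t)
    (F K : Type*) [Field F] [Fintype F] [CharP F p] [Field K] [Algebra F K]
    (hrank : Module.finrank F K = n) :
    Nat.card {x : K // LinearIndependent F
        (fun i : Fin n => x ^ (Fintype.card F) ^ (i : ℕ))}
      = (Fintype.card F) ^ ((p ^ e - 1) * t) *
        ∏ d ∈ t.divisors,
          ((Fintype.card F) ^ (orderOf ((Fintype.card F : ZMod d))) - 1) ^
            (Nat.totient d / orderOf ((Fintype.card F : ZMod d))) := by
  classical
  haveI factp : Fact p.Prime := ⟨hp⟩
  set q := Fintype.card F with hqdef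
  have hq2 : 1 < q := Fintype.one_lt_card
  have hpe1 : 1 ≤ p ^ e := Nat.one_le_pow _ _ hp.pos
  have hn0 : 0 < n := by rw [hn]; exact Nat.mul_pos (pow_pos hp.pos e) ht
  haveI : FiniteDimensional F K := FiniteDimensional.of_finrank_pos (hrank ▸ hn0)
  haveI : Finite K := Module.finite_of_finite F
  haveI fintK : Fintype K := Fintype.ofFinite K
  haveI : CharP K p := charP_of_injective_algebraMap (algebraMap F K).injective p
  have hcardK : Fintype.card K = q ^ n := by
    rw [Module.card_eq_pow_finrank (K := F) (V := K), hrank]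
  obtain ⟨k, -, hqpk⟩ := FiniteField.card F p
  have hadd : ∀ x y : K, (x + y) ^ q = x ^ q + y ^ q := by
    intro x y; rw [hqdef, hqpk]; exact add_pow_char_pow x y p ↑k
  have hF : ∀ c : F, (algebraMap F K c) ^ q = algebraMap F K c := by
    intro c; rw [← map_pow, FiniteField.pow_card]
  set σ := frobLin F K q hadd hF with hσ
  -- the polynomial `X^t - 1` and its factors
  set P : F[X] := X ^ t - 1 with hP
  have hPC : P = X ^ t - C 1 := by rw [map_one]
  have hPmonic : P.Monic := by rw [hPC]; exact monic_X_pow_sub_C 1 ht.ne'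
  have hPne : P ≠ 0 := hPmonic.ne_zero
  have hNmonic : (X ^ n - 1 : F[X]).Monic := by
    rw [show (X ^ n - 1 : F[X]) = X ^ n - C 1 by rw [map_one]]
    exact monic_X_pow_sub_C 1 hn0.ne'
  have hNdeg : (X ^ n - 1 : F[X]).natDegree = n := by
    simpa using Polynomial.natDegree_X_pow_sub_C (n := n) (r := (1 : F))
  have htF : (t : F) ≠ 0 := by
    rw [Ne, CharP.cast_eq_zero_iff F p t]; exact hpt
  have hPsep : P.Separable := by rw [hPC]; exact separable_X_pow_sub_C 1 htF one_ne_zero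
  have hPsq : Squarefree P := hPsep.squarefree
  set M := UniqueFactorizationMonoid.normalizedFactors P with hM
  have hMnodup : M.Nodup :=
    (UniqueFactorizationMonoid.squarefree_iff_nodup_normalizedFactors hPne).mp hPsq
  set s : Finset F[X] := M.toFinset with hs_def
  have hsval : s.val = M := by
    rw [hs_def, Multiset.toFinset_val, Multiset.dedup_eq_self.mpr hMnodup]
  have hmonM : ∀ f ∈ M, Monic f := by
    intro f hf
    have h1 := UniqueFactorizationMonoid.normalize_normalized_factor _ hf
    have h2 : f ≠ 0 := (UniqueFactorizationMonoid.irreducible_of_normalized_factor _ hf).ne_zero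
    rw [← h1]; exact monic_normalize h2
  have hmem : ∀ f ∈ s, f.Monic ∧ Irreducible f := by
    intro f hf
    rw [hs_def, Multiset.mem_toFinset] at hf
    exact ⟨hmonM f hf, UniqueFactorizationMonoid.irreducible_of_normalized_factor _ hf⟩
  have hprodM : M.prod = P := by
    refine eq_of_monic_of_associated ?_ hPmonic
      (UniqueFactorizationMonoid.prod_normalizedFactors hPne)
    refine monic_multiset_prod_of_monic _ _ fun i hi => ?_
    exact hmonM _ (Multiset.mem_map_of_mem _ hi)
  have hprods : ∏ f ∈ s, f = P := by
    have := Finset.prod_eq_multiset_prod s (fun f => f)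
    rw [this, hsval, Multiset.map_id', hprodM]
  have hNeq : ∏ f ∈ s, f ^ p ^ e = X ^ n - 1 := by
    rw [Finset.prod_pow, hprods, hP, sub_pow_char_pow, ← pow_mul, one_pow, mul_comm t, ← hn]
  -- core hypotheses
  have hcore_H : ∀ g : F[X], g.Monic → g ∣ ∏ f ∈ s, f ^ p ^ e →
      Nat.card ↥(LinearMap.ker (aeval σ g)) = q ^ g.natDegree := by
    intro g hg hgdvd
    rw [hNeq] at hgdvd
    obtain ⟨c, hc⟩ := hgdvd
    have hcmonic : c.Monic := hg.of_mul_monic_left (by rw [← hc]; exact hNmonic)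
    exact card_ker_eq hadd hF hcardK hg hcmonic hc.symm
  have hcore_V : Fintype.card K = q ^ (∏ f ∈ s, f ^ p ^ e).natDegree := by
    rw [hNeq, hNdeg]; exact hcardK
  have hA := core_count (F := F) (p ^ e) (pow_pos hp.pos e) s K inferInstance inferInstance
    fintK σ hmem hcore_H hcore_V
  -- key multiplication identity
  have hkey : ∀ f ∈ s, f * (f ^ (p ^ e - 1) * ∏ g ∈ s.erase f, g ^ p ^ e) = X ^ n - 1 := by
    intro f hf
    rw [← mul_assoc, ← pow_succ', Nat.sub_add_cancel hpe1,
      Finset.mul_prod_erase s (fun g => g ^ p ^ e) hf, hNeq]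
  -- `aeval σ (X^n-1) = 0` and sum expansion
  have hNσ : ∀ y : K, aeval σ (X ^ n - 1 : F[X]) y = 0 := by
    intro y
    rw [map_sub, map_pow, aeval_X, map_one, LinearMap.sub_apply, Module.End.one_apply,
      frobLin_pow_apply, ← hcardK, FiniteField.pow_card, sub_self]
  have hmulapply : ∀ (A B : F[X]) (x : K), aeval σ (A * B) x = aeval σ A (aeval σ B x) := by
    intro A B x; rw [map_mul, Module.End.mul_apply]
  have hsum : ∀ (g : F[X]), g.natDegree < n → ∀ x : K,
      aeval σ g x = ∑ i : Fin n, g.coeff (i : ℕ) • x ^ q ^ (i : ℕ) := by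
    intro g hdeg x
    rw [aeval_frobLin_apply, Fin.sum_univ_eq_sum_range (fun i => g.coeff i • x ^ q ^ i) n]
    refine Finset.sum_subset (Finset.range_subset_range.mpr (by omega)) ?_
    intro i _ hi
    rw [Finset.mem_range, Nat.lt_succ_iff, not_le] at hi
    rw [coeff_eq_zero_of_natDegree_lt hi, zero_smul]
  -- the equivalence of the two conditions
  have hiff : ∀ x : K, (LinearIndependent F fun i : Fin n => x ^ q ^ (i : ℕ)) ↔
      (∀ f ∈ s, aeval σ (f ^ (p ^ e - 1) * ∏ g ∈ s.erase f, g ^ p ^ e) x ≠ 0) := by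
    intro x
    constructor
    · intro hli f hf hzero
      set Cf := f ^ (p ^ e - 1) * ∏ g ∈ s.erase f, g ^ p ^ e with hCf
      have hCfmonic : Cf.Monic :=
        (((hmem f hf).1.pow _).mul
          (monic_prod_of_monic _ _ fun g hg => ((hmem g (Finset.mem_of_mem_erase hg)).1.pow _)))
      have hfmul : f * Cf = X ^ n - 1 := hkey f hf
      have hCfdeg : Cf.natDegree < n := by
        have hd := natDegree_mul (hmem f hf).1.ne_zero hCfmonic.ne_zero
        rw [hfmul, hNdeg] at hd
        have hfd : 0 < f.natDegree := (hmem f hf).2.natDegree_pos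
        omega
      have hzero' : ∑ i : Fin n, Cf.coeff (i : ℕ) • x ^ q ^ (i : ℕ) = 0 := by
        rw [← hsum Cf hCfdeg x, hzero]
      have hallz := Fintype.linearIndependent_iff.mp hli (fun i => Cf.coeff (i : ℕ)) hzero'
      have hCf0 : Cf = 0 := by
        apply Polynomial.ext
        intro j
        rw [coeff_zero]
        by_cases hj : j < n
        · exact hallz ⟨j, hj⟩
        · exact coeff_eq_zero_of_natDegree_lt (by omega)
      exact hCfmonic.ne_zero hCf0
    · intro hcond
      rw [Fintype.linearIndependent_iff]
      intro c hc
      by_contra hcon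
      push_neg at hcon
      obtain ⟨i0, hi0⟩ := hcon
      set g : F[X] := ∑ i : Fin n, Polynomial.monomial (i : ℕ) (c i) with hg
      have hgcoeff : ∀ i : Fin n, g.coeff (i : ℕ) = c i := by
        intro i
        rw [hg, finset_sum_coeff, Finset.sum_eq_single i]
        · rw [coeff_monomial, if_pos rfl]
        · intro j _ hji
          rw [coeff_monomial, if_neg (fun hcon2 => hji (Fin.ext hcon2))]
        · intro hcon2
          exact absurd (Finset.mem_univ i) hcon2
      have hgne : g ≠ 0 := fun hcon0 => hi0 (by rw [← hgcoeff i0, hcon0, coeff_zero])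
      have hgdeg : g.natDegree < n := by
        have h1 : g.natDegree ≤ n - 1 := by
          refine Polynomial.natDegree_sum_le_of_forall_le _ _ fun i _ => ?_
          exact le_trans (natDegree_monomial_le _) (by omega)
        omega
      have hgx : aeval σ g x = 0 := by
        calc aeval σ g x = ∑ i : Fin n, g.coeff (i : ℕ) • x ^ q ^ (i : ℕ) := hsum g hgdeg x
          _ = ∑ i : Fin n, c i • x ^ q ^ (i : ℕ) :=
              Finset.sum_congr rfl fun i _ => by rw [hgcoeff i]
          _ = 0 := hc
      set h : F[X] := EuclideanDomain.gcd g (X ^ n - 1 : F[X]) with hh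
      have hh0 : h ≠ 0 := fun hcon0 => hgne ((EuclideanDomain.gcd_eq_zero_iff).mp hcon0).1
      have hhg : h ∣ g := EuclideanDomain.gcd_dvd_left _ _
      have hhN : h ∣ X ^ n - 1 := EuclideanDomain.gcd_dvd_right _ _
      have hhx : aeval σ h x = 0 := by
        rw [hh, EuclideanDomain.gcd_eq_gcd_ab g (X ^ n - 1 : F[X]), map_add,
          LinearMap.add_apply, mul_comm g, mul_comm (X ^ n - 1 : F[X]), hmulapply, hmulapply,
          hgx, hNσ, map_zero, map_zero, add_zero]
      have hhdeg : h.natDegree < n := lt_of_le_of_lt (natDegree_le_of_dvd hhg hgne) hgdeg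
      obtain ⟨m, hm⟩ := hhN
      have hm0 : m ≠ 0 := by
        intro h0; rw [h0, mul_zero] at hm; exact hNmonic.ne_zero hm
      have hmdegpos : 0 < m.natDegree := by
        have hd := natDegree_mul hh0 hm0
        rw [← hm, hNdeg] at hd
        omega
      have hmnotunit : ¬ IsUnit m := fun hu => by
        rw [natDegree_eq_zero_of_isUnit hu] at hmdegpos; omega
      obtain ⟨f₀, hf₀irr, hf₀dvd⟩ := WfDvdMonoid.exists_irreducible_factor hmnotunit hm0
      have hf₀N : f₀ ∣ ∏ f ∈ s, f ^ p ^ e := by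
        rw [hNeq]
        exact hf₀dvd.trans ⟨h, by rw [hm]; ring⟩
      obtain ⟨f₁, hf₁s, hf₁dvd⟩ := hf₀irr.prime.exists_mem_finset_dvd hf₀N
      have hf₀f₁ : f₀ ∣ f₁ := hf₀irr.prime.dvd_of_dvd_pow hf₁dvd
      have hassoc : Associated f₀ f₁ := hf₀irr.associated_of_dvd (hmem f₁ hf₁s).2 hf₀f₁
      have hf₁m : f₁ ∣ m := hassoc.symm.dvd.trans hf₀dvd
      obtain ⟨m', hm'⟩ := hf₁m
      have hfmul : f₁ * (f₁ ^ (p ^ e - 1) * ∏ g' ∈ s.erase f₁, g' ^ p ^ e) = X ^ n - 1 :=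
        hkey f₁ hf₁s
      have hhCf : h ∣ f₁ ^ (p ^ e - 1) * ∏ g' ∈ s.erase f₁, g' ^ p ^ e := by
        refine ⟨m', mul_left_cancel₀ (hmem f₁ hf₁s).1.ne_zero ?_⟩
        rw [hfmul, hm, hm']; ring
      obtain ⟨w, hw⟩ := hhCf
      refine hcond f₁ hf₁s ?_
      rw [hw, mul_comm, hmulapply, hhx, map_zero]
  -- put the two countings together
  rw [Nat.card_congr (Equiv.subtypeEquivRight hiff), hA]
  -- split the factors by cyclotomic polynomials
  have hMsplit : M = ∑ d ∈ t.divisors,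
      UniqueFactorizationMonoid.normalizedFactors (cyclotomic d F) := by
    rw [hM, show P = ∏ d ∈ t.divisors, cyclotomic d F from
      (prod_cyclotomic_eq_X_pow_sub_one ht F).symm]
    exact normalizedFactors_finset_prod _ _ (fun d _ => cyclotomic_ne_zero d F)
  have hdeg_of_mem : ∀ d ∈ t.divisors,
      ∀ h' ∈ UniqueFactorizationMonoid.normalizedFactors (cyclotomic d F),
      h'.natDegree = orderOf ((q : ZMod d)) := by
    intro d hd h' hh'
    have hd0 : 0 < d := Nat.pos_of_mem_divisors hd
    have hpd : ¬ p ∣ d := fun hcon => hpt (hcon.trans (Nat.mem_divisors.mp hd).1)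
    exact natDegree_factor_cyclotomic F p hp d hd0 hpd h' hh'
  have horderpos : ∀ d ∈ t.divisors, 0 < orderOf ((q : ZMod d)) := by
    intro d hd
    haveI : NeZero d := ⟨(Nat.pos_of_mem_divisors hd).ne'⟩
    have hpd : ¬ p ∣ d := fun hcon => hpt (hcon.trans (Nat.mem_divisors.mp hd).1)
    refine orderOf_cast_pos q d ?_
    rw [hqdef, hqpk]
    exact Nat.Coprime.pow_left _ (hp.coprime_iff_not_dvd.mpr hpd)
  have hcount : ∀ d ∈ t.divisors,
      Multiset.card (UniqueFactorizationMonoid.normalizedFactors (cyclotomic d F))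
        * orderOf ((q : ZMod d)) = d.totient := by
    intro d hd
    have hmon : ∀ f ∈ UniqueFactorizationMonoid.normalizedFactors (cyclotomic d F),
        Monic f := by
      intro f hf
      have h1 := UniqueFactorizationMonoid.normalize_normalized_factor _ hf
      have h2 : f ≠ 0 :=
        (UniqueFactorizationMonoid.irreducible_of_normalized_factor _ hf).ne_zero
      rw [← h1]; exact monic_normalize h2
    have hprodc : (UniqueFactorizationMonoid.normalizedFactors (cyclotomic d F)).prod
        = cyclotomic d F :=
      eq_of_monic_of_associated
        (monic_multiset_prod_of_monic _ _ fun i hi => hmon _ (Multiset.mem_map_of_mem _ hi))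
        (cyclotomic.monic d F)
        (UniqueFactorizationMonoid.prod_normalizedFactors (cyclotomic_ne_zero d F))
    have h1 : (cyclotomic d F).natDegree
        = (Multiset.map natDegree
            (UniqueFactorizationMonoid.normalizedFactors (cyclotomic d F))).sum := by
      rw [← hprodc, natDegree_multiset_prod_of_monic _ hmon]
      rw [hprodc]
    have h2 : Multiset.map natDegree
          (UniqueFactorizationMonoid.normalizedFactors (cyclotomic d F))
        = Multiset.replicate
            (Multiset.card (UniqueFactorizationMonoid.normalizedFactors (cyclotomic d F)))
            (orderOf ((q : ZMod d))) := by
      rw [Multiset.eq_replicate]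
      refine ⟨by rw [Multiset.card_map], ?_⟩
      intro b hb
      obtain ⟨f', hf', rfl⟩ := Multiset.mem_map.mp hb
      exact hdeg_of_mem d hd f' hf'
    rw [h2, Multiset.sum_replicate, smul_eq_mul, natDegree_cyclotomic] at h1
    exact h1.symm
  -- final computation
  have hsplit : ∏ f ∈ s, (q ^ (p ^ e * f.natDegree) - q ^ ((p ^ e - 1) * f.natDegree))
      = ∏ d ∈ t.divisors,
          ((q ^ (p ^ e * orderOf ((q : ZMod d))) - q ^ ((p ^ e - 1) * orderOf ((q : ZMod d))))
            ^ (Multiset.card (UniqueFactorizationMonoid.normalizedFactors (cyclotomic d F)))) := by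
    rw [Finset.prod_eq_multiset_prod, hsval, hMsplit,
      multiset_prod_map_sum]
    refine Finset.prod_congr rfl fun d hd => ?_
    rw [Multiset.map_congr rfl (fun f' hf' => by
        rw [hdeg_of_mem d hd f' hf']), Multiset.map_const', Multiset.prod_replicate]
  rw [hsplit]
  have hfac : ∀ d ∈ t.divisors,
      q ^ (p ^ e * orderOf ((q : ZMod d))) - q ^ ((p ^ e - 1) * orderOf ((q : ZMod d)))
        = q ^ ((p ^ e - 1) * orderOf ((q : ZMod d))) * (q ^ orderOf ((q : ZMod d)) - 1) := by
    intro d hd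
    rw [Nat.mul_sub, mul_one, ← pow_add]
    congr 2
    have h1 : p ^ e - 1 + 1 = p ^ e := Nat.sub_add_cancel hpe1
    conv_lhs => rw [← h1]
    rw [add_mul, one_mul]
  rw [Finset.prod_congr rfl (fun d hd => by rw [hfac d hd, mul_pow]),
    Finset.prod_mul_distrib]
  congr 1
  · -- the q-power part
    have h1 : ∀ d ∈ t.divisors,
        (q ^ ((p ^ e - 1) * orderOf ((q : ZMod d))))
          ^ (Multiset.card (UniqueFactorizationMonoid.normalizedFactors (cyclotomic d F)))
        = q ^ ((p ^ e - 1) * d.totient) := by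
      intro d hd
      rw [← pow_mul, mul_assoc]
      congr 1
      rw [mul_comm (orderOf _), hcount d hd]
    rw [Finset.prod_congr rfl h1, Finset.prod_pow_eq_pow_sum, ← Finset.mul_sum]
    congr 1
    rw [show ∑ d ∈ t.divisors, d.totient = t from Nat.sum_totient t]
  · refine Finset.prod_congr rfl fun d hd => ?_
    congr 1
    have h1 := hcount d hd
    have h2 := horderpos d hd
    exact (Nat.div_eq_of_eq_mul_left h2 h1.symm).symm
end

section
/- Let q be a prime power, n ≥ 1, and K = F_{q^n} viewed as an extension of F_q. For a polynomial g = ∑_i c_i X^i ∈ F_q[X], define g(ρ)(x) = ∑_i c_i x^{q^i} for x ∈ K, where ρ is the q-power Frobenius. Then for x ∈ K, the conjugates x, x^q, ..., x^{q^{n-1}} are linearly independent over F_q if and only if for every monic polynomial g ∈ F_q[X] dividing X^n - 1 with g ≠ X^n - 1, one has g(ρ)(x) ≠ 0. -/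
open Polynomial


/-- Let q be a prime power and K = F_{q^n}. For g = ∑ c_i X^i ∈ F_q[X] write
g(ρ)(x) = ∑ c_i x^{q^i}. Then the conjugates x, x^q, ..., x^{q^{n-1}} of x ∈ K are
linearly independent over F_q iff g(ρ)(x) ≠ 0 for every monic g ∣ X^n - 1 with
g ≠ X^n - 1. -/
theorem stmt15 (F K : Type*) [Field F] [Fintype F] [Field K] [Algebra F K]
    (n : ℕ) (hn : 0 < n) (hrank : Module.finrank F K = n) (x : K) :
    LinearIndependent F (fun i : Fin n => x ^ (Fintype.card F) ^ (i : ℕ)) ↔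
      ∀ g : Polynomial F, g.Monic → g ∣ (Polynomial.X ^ n - 1) →
        g ≠ Polynomial.X ^ n - 1 →
        (g.sum fun i c => c • x ^ (Fintype.card F) ^ i) ≠ 0 := by
  classical
  set q := Fintype.card F with hq
  set p := ringChar F with hpdef
  haveI : CharP F p := ringChar.charP F
  obtain ⟨k, hp, hcard⟩ := FiniteField.card F p
  haveI : Fact p.Prime := ⟨hp⟩
  haveI : CharP K p := charP_of_injective_algebraMap (algebraMap F K).injective p
  haveI : FiniteDimensional F K := FiniteDimensional.of_finrank_pos (hrank ▸ hn)
  haveI : Finite K := Module.finite_of_finite F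
  haveI : Fintype K := Fintype.ofFinite K
  have hcardK : Fintype.card K = q ^ n := by
    rw [Module.card_eq_pow_finrank (K := F) (V := K), hrank]
  -- Frobenius as F-linear endomorphism
  let ρ : Module.End F K :=
    { toFun := fun y => y ^ q
      map_add' := by
        intro y z
        simp only [hq, hcard]
        exact add_pow_char_pow y z p ↑k
      map_smul' := by
        intro c y
        simp only [RingHom.id_apply, Algebra.smul_def]
        rw [mul_pow, ← map_pow, FiniteField.pow_card] }
  have hρpow : ∀ (i : ℕ) (y : K), (ρ ^ i) y = y ^ q ^ i := by
    intro i
    induction i with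
    | zero => intro y; simp
    | succ i ih =>
      intro y
      rw [pow_succ, Module.End.mul_apply, ih]
      show (y ^ q) ^ q ^ i = _
      rw [← pow_mul, pow_succ']
  have key : ∀ g : F[X], (g.sum fun i c => c • x ^ q ^ i) = aeval ρ g x := by
    intro g
    rw [aeval_endomorphism]
    refine Finset.sum_congr rfl fun i _ => ?_
    simp only [hρpow]
  have hXnM : ((X : F[X]) ^ n - 1).Monic := by
    simpa using monic_X_pow_sub_C (1 : F) hn.ne'
  have hXn0 : (X ^ n - 1 : F[X]) ≠ 0 := hXnM.ne_zero
  have hXndeg : ((X : F[X]) ^ n - 1).natDegree = n := by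
    simpa using natDegree_X_pow_sub_C (n := n) (r := (1 : F))
  have hdegXn : ((X : F[X]) ^ n - 1).degree = n := by
    rw [degree_eq_natDegree hXn0, hXndeg]
  -- the annihilator ideal
  let I : Ideal F[X] :=
    { carrier := { g | aeval ρ g x = 0 }
      add_mem' := by
        intro a b ha hb
        simp only [Set.mem_setOf_eq, map_add, LinearMap.add_apply] at *
        rw [ha, hb, add_zero]
      zero_mem' := by simp
      smul_mem' := by
        intro c g hg
        simp only [Set.mem_setOf_eq, smul_eq_mul, map_mul, Module.End.mul_apply] at *
        rw [hg, map_zero] }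
  have hmemI : ∀ g : F[X], g ∈ I ↔ aeval ρ g x = 0 := fun _ => Iff.rfl
  have hXnI : (X ^ n - 1 : F[X]) ∈ I := by
    rw [hmemI]
    have hfix : (ρ ^ n) x = x := by
      rw [hρpow, ← hcardK, FiniteField.pow_card]
    simp only [map_sub, map_pow, map_one, LinearMap.sub_apply, Module.End.pow_apply,
      aeval_X, Module.End.one_apply]
    rw [← Module.End.pow_apply, hfix, sub_self]
  constructor
  · -- LI → condition
    intro hLI g hgm hgd hgne hzero
    have hglt : g.degree < n := by
      have hle : g.natDegree ≤ n := by
        have := Polynomial.natDegree_le_of_dvd hgd hXn0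
        rwa [hXndeg] at this
      have hne : g.natDegree ≠ n := by
        intro heq
        apply hgne
        obtain ⟨u, hu⟩ := hgd
        have hu0 : u ≠ 0 := by rintro rfl; rw [mul_zero] at hu; exact hXn0 hu
        have hdeg : n = g.natDegree + u.natDegree := by
          rw [← natDegree_mul hgm.ne_zero hu0, ← hu, hXndeg]
        have hu_deg : u.natDegree = 0 := by omega
        have hlead : g.leadingCoeff * u.leadingCoeff = 1 := by
          rw [← leadingCoeff_mul, ← hu]; exact hXnM
        rw [hgm.leadingCoeff, one_mul] at hlead
        have : u = 1 := by
          rw [eq_C_of_natDegree_eq_zero hu_deg,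
            show u.coeff 0 = u.leadingCoeff by rw [leadingCoeff, hu_deg], hlead, map_one]
        rw [hu, this, mul_one]
      rw [degree_eq_natDegree hgm.ne_zero]
      exact_mod_cast lt_of_le_of_ne hle hne
    have hsum := Polynomial.sum_fin (fun i c => c • x ^ q ^ i) (by simp) hglt
    have hcoeff0 : ∀ i : Fin n, g.coeff i = 0 := by
      rw [Fintype.linearIndependent_iff] at hLI
      exact hLI (fun i => g.coeff i) (by rw [hsum]; exact hzero)
    have hg0 : g = 0 := by
      ext j
      by_cases hj : j < n
      · simpa using hcoeff0 ⟨j, hj⟩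
      · rw [coeff_eq_zero_of_natDegree_lt, coeff_zero]
        have := (natDegree_lt_iff_degree_lt hgm.ne_zero).mpr hglt
        omega
    exact hgm.ne_zero hg0
  · -- condition → LI
    intro H
    rw [Fintype.linearIndependent_iff]
    intro c hc
    set g : F[X] := ∑ i : Fin n, monomial (i : ℕ) (c i) with hgdef
    have hcoeff : ∀ i : Fin n, g.coeff i = c i := by
      intro i
      rw [hgdef, finset_sum_coeff]
      rw [Finset.sum_eq_single i]
      · simp
      · intro b _ hb
        rw [coeff_monomial, if_neg (fun h => hb (Fin.ext h))]
      · simp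
    have hgI : g ∈ I := by
      rw [hmemI, hgdef, map_sum]
      simp only [LinearMap.coe_sum, Finset.sum_apply]
      rw [← hc]
      refine Finset.sum_congr rfl fun i _ => ?_
      rw [aeval_monomial, Module.End.mul_apply, hρpow, Module.algebraMap_end_apply]
    have hI0 : I ≠ ⊥ := by
      intro h
      rw [h] at hXnI
      exact hXn0 (by simpa using hXnI)
    haveI : I.IsPrincipal := inferInstance
    set d0 := Submodule.IsPrincipal.generator I with hd0def
    have hd00 : d0 ≠ 0 := by
      intro h
      exact hI0 ((Submodule.IsPrincipal.eq_bot_iff_generator_eq_zero I).2 h)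
    set d := normalize d0 with hddef
    have hdm : d.Monic := monic_normalize hd00
    have hddvd : ∀ h : F[X], h ∈ I ↔ d ∣ h := by
      intro h
      rw [Submodule.IsPrincipal.mem_iff_generator_dvd, hddef]
      exact ⟨fun hh => normalize_dvd_iff.mpr hh, fun hh => normalize_dvd_iff.mp hh⟩
    have hdI : d ∈ I := (hddvd d).mpr dvd_rfl
    have hdXn : d ∣ (X ^ n - 1 : F[X]) := (hddvd _).mp hXnI
    have hdeq : d = X ^ n - 1 := by
      by_contra hne
      exact H d hdm hdXn hne (by rw [key]; exact hdI)
    have hdg : (X ^ n - 1 : F[X]) ∣ g := hdeq ▸ (hddvd g).mp hgI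
    have hglt : g.degree < ((X : F[X]) ^ n - 1).degree := by
      rw [hdegXn, hgdef]
      apply lt_of_le_of_lt (degree_sum_le _ _)
      rw [Finset.sup_lt_iff (by exact_mod_cast WithBot.bot_lt_coe n)]
      intro i _
      exact lt_of_le_of_lt (degree_monomial_le _ _) (by exact_mod_cast i.isLt)
    have hg0 : g = 0 := Polynomial.eq_zero_of_dvd_of_degree_lt hdg hglt
    intro i
    rw [← hcoeff i, hg0, coeff_zero]
end

section
/- Let q be a prime power and let f = X^2 + aX + b be a monic irreducible polynomial over F_q, with root r in F_{q^2}. If a · (4b - a^2) ≠ 0, then the two roots r and r^q of f are linearly independent over F_q (i.e., f is normal over F_q). -/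
open Polynomial

/-- Fixed points of `x ↦ x ^ q` in a field extension of `F` (with `q = |F|`)
lie in the image of `F`. -/
lemma fix_mem_range (F K : Type*) [Field F] [Fintype F] [Field K] [Algebra F K]
    (x : K) (hx : x ^ Fintype.card F = x) : x ∈ Set.range (algebraMap F K) := by
  classical
  set q := Fintype.card F with hq
  have hq2 : 1 < q := Fintype.one_lt_card
  set P : K[X] := X ^ q - X with hP
  have hPne : P ≠ 0 := FiniteField.X_pow_card_sub_X_ne_zero K hq2
  have hdeg : P.natDegree = q := FiniteField.X_pow_card_sub_X_natDegree_eq K hq2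
  have hroot : ∀ y : F, IsRoot P (algebraMap F K y) := by
    intro y
    simp only [hP, IsRoot.def, eval_sub, eval_pow, eval_X, sub_eq_zero, ← map_pow]
    rw [hq, FiniteField.pow_card]
  set s : Finset K := Finset.univ.image (algebraMap F K) with hs
  have hsc : s.card = q := by
    rw [hs, Finset.card_image_of_injective _ (algebraMap F K).injective, Finset.card_univ]
  have hsub : s ⊆ P.roots.toFinset := by
    intro y hy
    rw [hs, Finset.mem_image] at hy
    obtain ⟨z, _, rfl⟩ := hy
    rw [Multiset.mem_toFinset, mem_roots hPne]
    exact hroot z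
  have hcard : P.roots.toFinset.card ≤ q := by
    calc P.roots.toFinset.card ≤ Multiset.card P.roots := P.roots.toFinset_card_le
      _ ≤ P.natDegree := P.card_roots'
      _ = q := hdeg
  have hEq : s = P.roots.toFinset :=
    Finset.eq_of_subset_of_card_le hsub (hcard.trans hsc.ge)
  have hxs : x ∈ s := by
    rw [hEq, Multiset.mem_toFinset, mem_roots hPne]
    simp [hP, IsRoot.def, hx]
  rw [hs, Finset.mem_image] at hxs
  obtain ⟨z, _, rfl⟩ := hxs
  exact ⟨z, rfl⟩

/-- Let f = X^2 + aX + b be monic irreducible over F_q with root r ∈ F_{q^2}. If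
a(4b - a²) ≠ 0 then the roots r, r^q are linearly independent over F_q. -/
theorem stmt16 (F K : Type*) [Field F] [Fintype F] [Field K] [Algebra F K]
    (hrank : Module.finrank F K = 2) (a b : F)
    (hirr : Irreducible (Polynomial.X ^ 2 + Polynomial.C a * Polynomial.X + Polynomial.C b))
    (r : K)
    (hr : Polynomial.aeval r (Polynomial.X ^ 2 + Polynomial.C a * Polynomial.X + Polynomial.C b) = 0)
    (h : a * (4 * b - a ^ 2) ≠ 0) :
    LinearIndependent F (fun i : Fin 2 => r ^ (Fintype.card F) ^ (i : ℕ)) := by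
  classical
  have ha : a ≠ 0 := fun h0 => h (by rw [h0, zero_mul])
  set q := Fintype.card F with hq
  set A := algebraMap F K a with hA
  set B := algebraMap F K b with hB
  have hr2 : r ^ 2 + A * r + B = 0 := by simpa using hr
  -- r is not in the image of F
  have hnotF : r ∉ Set.range (algebraMap F K) := by
    rintro ⟨x, rfl⟩
    have hx : x ^ 2 + a * x + b = 0 := by
      have : algebraMap F K (x ^ 2 + a * x + b) = 0 := by
        rw [map_add, map_add, map_mul, map_pow]; exact hr2
      exact (_root_.map_eq_zero _).mp this
    have hdvd : (X - C x) ∣ (X ^ 2 + C a * X + C b : F[X]) := by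
      apply dvd_iff_isRoot.mpr
      simp [IsRoot.def, hx]
    obtain ⟨g, hg⟩ := hdvd
    rcases hirr.isUnit_or_isUnit hg with hu | hu
    · exact (not_isUnit_X_sub_C x) hu
    · have hdeg2 : (X ^ 2 + C a * X + C b : F[X]).natDegree = 2 := by
        compute_degree!
      have hgdeg : g.natDegree = 1 := by
        have hXx : (X - C x : F[X]).natDegree = 1 := natDegree_X_sub_C x
        have hgne : g ≠ 0 := by
          rintro rfl
          rw [mul_zero] at hg
          simp [hg] at hdeg2
        have := natDegree_mul (X_sub_C_ne_zero x) hgne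
        rw [← hg, hdeg2, hXx] at this
        omega
      exact (not_isUnit_of_natDegree_pos g (by omega)) hu
  -- characteristic setup for Frobenius
  set p := ringChar F with hpdef
  haveI : CharP F p := ringChar.charP F
  obtain ⟨n, hpprime, hcard⟩ := FiniteField.card F p
  haveI : Fact p.Prime := ⟨hpprime⟩
  haveI : CharP K p := charP_of_injective_algebraMap (algebraMap F K).injective p
  -- r^q is also a root
  have hAq : A ^ q = A := by rw [hA, ← map_pow, FiniteField.pow_card]
  have hBq : B ^ q = B := by rw [hB, ← map_pow, FiniteField.pow_card]
  have hfr : (r ^ q) ^ 2 + A * r ^ q + B = 0 := by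
    have h0 : iterateFrobenius K p n (r ^ 2 + A * r + B) = 0 := by
      rw [hr2, map_zero]
    simp only [map_add, map_mul, map_pow, iterateFrobenius_def] at h0
    rw [← hcard] at h0
    rw [hAq, hBq] at h0
    linear_combination h0
  -- r^q = -A - r
  have key : (r ^ q - r) * (r ^ q + r + A) = 0 := by linear_combination hfr - hr2
  have hne : r ^ q ≠ r := by
    intro heq
    exact hnotF (fix_mem_range F K r heq)
  have hrr : r ^ q = -A - r := by
    rcases mul_eq_zero.mp key with h1 | h1
    · exact absurd (by linear_combination h1) hne
    · linear_combination h1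
  -- linear independence
  have hfun : (fun i : Fin 2 => r ^ q ^ (i : ℕ)) = ![r, r ^ q] := by
    funext i
    fin_cases i <;> norm_num
  rw [hfun, LinearIndependent.pair_iff]
  intro s t hst
  rw [Algebra.smul_def, Algebra.smul_def, hrr] at hst
  by_cases hst2 : s = t
  · subst hst2
    have : algebraMap F K s * A = 0 := by linear_combination -hst
    rcases mul_eq_zero.mp this with h1 | h1
    · have : s = 0 := (_root_.map_eq_zero _).mp h1
      exact ⟨this, this⟩
    · exact absurd ((_root_.map_eq_zero _).mp h1) ha
  · exfalso
    apply hnotF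
    refine ⟨t * a / (s - t), ?_⟩
    have hst3 : algebraMap F K (s - t) ≠ 0 := by
      rw [map_ne_zero_iff _ (algebraMap F K).injective]
      exact sub_ne_zero_of_ne hst2
    have hst4 : algebraMap F K s - algebraMap F K t ≠ 0 := by
      rw [← map_sub]; exact hst3
    rw [map_div₀, map_mul, map_sub, div_eq_iff hst4]
    linear_combination -hst
end

section
/- Let q be a prime power and let f = X^3 + aX^2 + bX + c be a monic irreducible polynomial over F_q, with root r in F_{q^3}. If a · (a^2 - 3b) ≠ 0, then the three roots r, r^q, r^{q^2} of f are linearly independent over F_q (i.e., f is normal over F_q). -/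
open Polynomial

lemma aux_fixed {F K : Type*} [Field F] [Fintype F] [Field K] [Algebra F K]
    (y : K) (hy : y ^ Fintype.card F = y) : ∃ s : F, algebraMap F K s = y := by
  classical
  set q := Fintype.card F with hq
  have hq2 : 1 < q := Fintype.one_lt_card
  set P : K[X] := X ^ q - X with hP
  have hP0 : P ≠ 0 := by
    intro h0
    have h1 : P.coeff q = 0 := by rw [h0]; simp
    rw [hP, coeff_sub, coeff_X_pow, if_pos rfl, coeff_X, if_neg hq2.ne, sub_zero] at h1
    exact one_ne_zero h1
  have hdegP : P.natDegree ≤ q := by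
    refine le_trans (natDegree_sub_le _ _) ?_
    simp [natDegree_X_pow]
    omega
  set S : Finset K := Finset.univ.image (algebraMap F K) with hS
  have hcardS : S.card = q := by
    rw [hS, Finset.card_image_of_injective _ (algebraMap F K).injective, Finset.card_univ]
  have hsub : S ⊆ P.roots.toFinset := by
    intro u hu
    rw [hS, Finset.mem_image] at hu
    obtain ⟨s, -, rfl⟩ := hu
    rw [Multiset.mem_toFinset, mem_roots hP0]
    simp only [hP, map_sub, eval_sub, eval_pow, eval_X, IsRoot.def]
    rw [← map_pow, FiniteField.pow_card, sub_self]
  have hcardT : P.roots.toFinset.card ≤ q :=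
    le_trans (Multiset.toFinset_card_le _) (le_trans (P.card_roots' ) hdegP)
  have heq : S = P.roots.toFinset :=
    Finset.eq_of_subset_of_card_le hsub (by omega)
  have hy' : y ∈ P.roots.toFinset := by
    rw [Multiset.mem_toFinset, mem_roots hP0]
    simp [hP, hy]
  rw [← heq, hS, Finset.mem_image] at hy'
  obtain ⟨s, -, hs⟩ := hy'
  exact ⟨s, hs⟩


/-- Let f = X^3 + aX^2 + bX + c be monic irreducible over F_q with root r ∈ F_{q^3}.
If a(a² - 3b) ≠ 0 then the roots r, r^q, r^{q²} are linearly independent over F_q. -/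
theorem stmt17 (F K : Type*) [Field F] [Fintype F] [Field K] [Algebra F K]
    (hrank : Module.finrank F K = 3) (a b c : F)
    (hirr : Irreducible (Polynomial.X ^ 3 + Polynomial.C a * Polynomial.X ^ 2 +
      Polynomial.C b * Polynomial.X + Polynomial.C c))
    (r : K)
    (hr : Polynomial.aeval r (Polynomial.X ^ 3 + Polynomial.C a * Polynomial.X ^ 2 +
      Polynomial.C b * Polynomial.X + Polynomial.C c) = 0)
    (h : a * (a ^ 2 - 3 * b) ≠ 0) :
    LinearIndependent F (fun i : Fin 3 => r ^ (Fintype.card F) ^ (i : ℕ)) := by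
  classical
  have hFD : FiniteDimensional F K := FiniteDimensional.of_finrank_eq_succ hrank
  have hfinK : Finite K := Module.finite_of_finite F
  have : Fintype K := Fintype.ofFinite K
  have hcharK : CharP K (ringChar F) :=
    charP_of_injective_algebraMap (algebraMap F K).injective (ringChar F)
  obtain ⟨n, hpprime, hcard⟩ := FiniteField.card F (ringChar F)
  haveI : Fact (Nat.Prime (ringChar F)) := ⟨hpprime⟩
  have hadd : ∀ u v : K, (u + v) ^ Fintype.card F = u ^ Fintype.card F + v ^ Fintype.card F := by
    intro u v
    rw [hcard]
    exact add_pow_char_pow u v _ _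
  have halg : ∀ s : F, (algebraMap F K s) ^ Fintype.card F = algebraMap F K s := by
    intro s
    rw [← map_pow, FiniteField.pow_card]
  have hcardK : Fintype.card F * (Fintype.card F * Fintype.card F) = Fintype.card K := by
    rw [Module.card_eq_pow_finrank (K := F) (V := K), hrank]; ring
  have hzq : (((r ^ Fintype.card F) ^ Fintype.card F) ^ Fintype.card F) = r := by
    rw [← pow_mul, ← pow_mul, hcardK]
    exact FiniteField.pow_card r
  obtain ⟨α, hα⟩ : ∃ s : F, algebraMap F K s
      = r + r ^ Fintype.card F + (r ^ Fintype.card F) ^ Fintype.card F := by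
    apply aux_fixed
    rw [hadd, hadd, hzq]; ring
  obtain ⟨β, hβ⟩ : ∃ s : F, algebraMap F K s
      = r * r ^ Fintype.card F + r ^ Fintype.card F * (r ^ Fintype.card F) ^ Fintype.card F
        + (r ^ Fintype.card F) ^ Fintype.card F * r := by
    apply aux_fixed
    rw [hadd, hadd, mul_pow, mul_pow, mul_pow, hzq]; ring
  obtain ⟨γ, hγ⟩ : ∃ s : F, algebraMap F K s
      = r * r ^ Fintype.card F * (r ^ Fintype.card F) ^ Fintype.card F := by
    apply aux_fixed
    rw [mul_pow, mul_pow, hzq]; ring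
  set f : F[X] := X ^ 3 + C a * X ^ 2 + C b * X + C c with hf
  have hmon : f.Monic := by
    rw [hf]; monicity!
  have hdegf : f.natDegree = 3 := by
    rw [hf]; compute_degree!
  have hmin : minpoly F r = f := (minpoly.eq_of_irreducible_of_monic hirr hr hmon).symm
  set g : F[X] := X ^ 3 - C α * X ^ 2 + C β * X - C γ with hg
  have hgmon : g.Monic := by
    rw [hg]; monicity!
  have hdegg : g.natDegree = 3 := by
    rw [hg]; compute_degree!
  have hgr : Polynomial.aeval r g = 0 := by
    rw [hg]
    simp only [map_add, map_sub, map_mul, map_pow, aeval_X, aeval_C]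
    rw [hα, hβ, hγ]
    ring
  have hdvd : f ∣ g := by
    rw [← hmin]
    exact minpoly.dvd F r hgr
  have hfg : g = f :=
    Polynomial.eq_of_monic_of_dvd_of_natDegree_le hmon hgmon hdvd
      (by rw [hdegg, hdegf])
  have hcoeff2 : (-α : F) = a := by
    have h2 := congrArg (fun p => Polynomial.coeff p 2) hfg
    simp only [hg, hf, coeff_add, coeff_sub, coeff_X_pow, coeff_C_mul, coeff_X, coeff_C] at h2
    norm_num at h2
    exact h2
  have hcoeff1 : (β : F) = b := by
    have h2 := congrArg (fun p => Polynomial.coeff p 1) hfg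
    simp only [hg, hf, coeff_add, coeff_sub, coeff_X_pow, coeff_C_mul, coeff_X, coeff_C] at h2
    norm_num at h2
    exact h2
  have hs1 : r + r ^ Fintype.card F + (r ^ Fintype.card F) ^ Fintype.card F
      = -(algebraMap F K a) := by
    rw [← hα, ← hcoeff2, map_neg, neg_neg]
  have hs2 : r * r ^ Fintype.card F + r ^ Fintype.card F * (r ^ Fintype.card F) ^ Fintype.card F
      + (r ^ Fintype.card F) ^ Fintype.card F * r = algebraMap F K b := by
    rw [← hβ, hcoeff1]
  by_contra hlin
  obtain ⟨w, hwsum, i, hwi⟩ := Fintype.not_linearIndependent_iff.mp hlin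
  have E0 : algebraMap F K (w 0) * r + algebraMap F K (w 1) * r ^ Fintype.card F
      + algebraMap F K (w 2) * (r ^ Fintype.card F) ^ Fintype.card F = 0 := by
    have h3 := hwsum
    rw [Fin.sum_univ_three] at h3
    simp only [Fin.val_zero, Fin.val_one, Fin.val_two, pow_zero, pow_one,
      Algebra.smul_def] at h3
    rw [show (Fintype.card F : ℕ) ^ 2 = Fintype.card F * Fintype.card F from sq (Fintype.card F),
      pow_mul] at h3
    exact h3
  have E1 : algebraMap F K (w 0) * r ^ Fintype.card F
      + algebraMap F K (w 1) * (r ^ Fintype.card F) ^ Fintype.card F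
      + algebraMap F K (w 2) * r = 0 := by
    have h4 := congrArg (fun t : K => t ^ Fintype.card F) E0
    simp only [hadd, mul_pow, halg, hzq, zero_pow Fintype.card_ne_zero] at h4
    exact h4
  have E2 : algebraMap F K (w 0) * (r ^ Fintype.card F) ^ Fintype.card F
      + algebraMap F K (w 1) * r
      + algebraMap F K (w 2) * r ^ Fintype.card F = 0 := by
    have h4 := congrArg (fun t : K => t ^ Fintype.card F) E1
    simp only [hadd, mul_pow, halg, hzq, zero_pow Fintype.card_ne_zero] at h4
    exact h4
  set M : Matrix (Fin 3) (Fin 3) K :=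
    !![r, r ^ Fintype.card F, (r ^ Fintype.card F) ^ Fintype.card F;
       r ^ Fintype.card F, (r ^ Fintype.card F) ^ Fintype.card F, r;
       (r ^ Fintype.card F) ^ Fintype.card F, r, r ^ Fintype.card F] with hM
  have hdet : M.det = algebraMap F K (a * (a ^ 2 - 3 * b)) := by
    have hA : algebraMap F K a
        = -(r + r ^ Fintype.card F + (r ^ Fintype.card F) ^ Fintype.card F) := by
      rw [hs1, neg_neg]
    have hB := hs2.symm
    rw [map_mul, map_sub, map_pow, map_mul, map_ofNat, hA, hB]
    rw [hM, Matrix.det_fin_three]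
    norm_num [Matrix.cons_val_zero, Matrix.cons_val_one, Matrix.cons_val_two]
    ring
  have hdetne : M.det ≠ 0 := by
    rw [hdet]
    intro h0
    exact h ((map_eq_zero_iff (algebraMap F K) (algebraMap F K).injective).mp h0)
  have hMv : M.mulVec (fun j => algebraMap F K (w j)) = 0 := by
    funext j
    fin_cases j
    · simp [hM, Matrix.mulVec, dotProduct, Fin.sum_univ_three]
      linear_combination E0
    · simp [hM, Matrix.mulVec, dotProduct, Fin.sum_univ_three]
      linear_combination E1
    · simp [hM, Matrix.mulVec, dotProduct, Fin.sum_univ_three]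
      linear_combination E2
  have hv0 := Matrix.eq_zero_of_mulVec_eq_zero hdetne hMv
  have hz0 : algebraMap F K (w i) = 0 := congrFun hv0 i
  exact hwi ((map_eq_zero_iff (algebraMap F K) (algebraMap F K).injective).mp hz0)
end

section
/- Let q be a prime power and let f = X^4 + aX^3 + bX^2 + cX + d be a monic irreducible polynomial over F_q, with root r in F_{q^4}. If a ≠ 0, and -a^6 + 8ba^4 - 16ca^3 - 16b^2a^2 + 64bca - 64c^2 ≠ 0, and a^6 - 8ba^4 + 4ca^3 + 20b^2a^2 - 24da^2 - 8bca - 16b^3 - 8c^2 + 64bd ≠ 0, then the four roots r, r^q, r^{q^2}, r^{q^3} of f are linearly independent over F_q (i.e., f is normal over F_q). -/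
open Polynomial

lemma aux_fix (F K : Type*) [Field F] [Fintype F] [Field K] [Fintype K] [Algebra F K]
    (x : K) (hx : x ^ Fintype.card F = x) : ∃ t : F, algebraMap F K t = x := by
  classical
  by_contra hnx
  push_neg at hnx
  set q := Fintype.card F with hq
  have hq2 : 1 < q := Fintype.one_lt_card
  set P : Polynomial K := X ^ q - X with hP
  have hPdeg : P.natDegree = q := by
    unfold P
    compute_degree
    · rw [if_neg (by omega)]; norm_num
    · omega
  have hP0 : P ≠ 0 := by
    intro h
    rw [h, natDegree_zero] at hPdeg
    omega
  have hmem : ∀ z : K, z ^ q = z → z ∈ P.roots.toFinset := by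
    intro z hz
    rw [Multiset.mem_toFinset, mem_roots hP0]
    simp [hP, IsRoot, hz]
  have himg : (insert x (Finset.univ.image (algebraMap F K))) ⊆ P.roots.toFinset := by
    intro z hz
    rcases Finset.mem_insert.mp hz with h | h
    · exact h ▸ hmem x hx
    · obtain ⟨t, -, rfl⟩ := Finset.mem_image.mp h
      exact hmem _ (by rw [← map_pow, FiniteField.pow_card])
  have hcard1 : (insert x (Finset.univ.image (algebraMap F K))).card = q + 1 := by
    rw [Finset.card_insert_of_notMem, Finset.card_image_of_injective _
      (algebraMap F K).injective, Finset.card_univ]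
    intro h
    obtain ⟨t, -, ht⟩ := Finset.mem_image.mp h
    exact hnx t ht
  have := Finset.card_le_card himg
  have h2 := Multiset.toFinset_card_le P.roots
  have h3 := P.card_roots' 
  omega

lemma det4 {R : Type*} [CommRing R] (x1 x2 x3 x4 : R) :
    Matrix.det !![x1,x2,x3,x4; x2,x3,x4,x1; x3,x4,x1,x2; x4,x1,x2,x3]
      = -((x1+x2+x3+x4) * (x1-x2+x3-x4) * ((x1-x3)^2 + (x2-x4)^2)) := by
  rw [Matrix.det_succ_row_zero]
  simp [Fin.sum_univ_succ, Matrix.det_succ_row_zero, Fin.succAbove, Fin.castSucc,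
    Fin.castAdd, Fin.castLE]
  ring

set_option maxHeartbeats 1000000 in
/-- Let f = X^4 + aX^3 + bX^2 + cX + d be monic irreducible over F_q with root
r ∈ F_{q^4}. If a ≠ 0, -a^6+8ba^4-16ca^3-16b²a²+64bca-64c² ≠ 0, and
a^6-8ba^4+4ca^3+20b²a²-24da²-8bca-16b³-8c²+64bd ≠ 0, then the roots
r, r^q, r^{q²}, r^{q³} are linearly independent over F_q. -/
theorem stmt18 (F K : Type*) [Field F] [Fintype F] [Field K] [Algebra F K]
    (hrank : Module.finrank F K = 4) (a b c d : F)
    (hirr : Irreducible (Polynomial.X ^ 4 + Polynomial.C a * Polynomial.X ^ 3 +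
      Polynomial.C b * Polynomial.X ^ 2 + Polynomial.C c * Polynomial.X + Polynomial.C d))
    (r : K)
    (hr : Polynomial.aeval r (Polynomial.X ^ 4 + Polynomial.C a * Polynomial.X ^ 3 +
      Polynomial.C b * Polynomial.X ^ 2 + Polynomial.C c * Polynomial.X + Polynomial.C d) = 0)
    (ha : a ≠ 0)
    (h1 : -a ^ 6 + 8 * b * a ^ 4 - 16 * c * a ^ 3 - 16 * b ^ 2 * a ^ 2 +
      64 * b * c * a - 64 * c ^ 2 ≠ 0)
    (h2 : a ^ 6 - 8 * b * a ^ 4 + 4 * c * a ^ 3 + 20 * b ^ 2 * a ^ 2 - 24 * d * a ^ 2 -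
      8 * b * c * a - 16 * b ^ 3 - 8 * c ^ 2 + 64 * b * d ≠ 0) :
    LinearIndependent F (fun i : Fin 4 => r ^ (Fintype.card F) ^ (i : ℕ)) := by
  classical
  have hinj : Function.Injective (algebraMap F K) := (algebraMap F K).injective
  have hfd : FiniteDimensional F K :=
    Module.finite_of_finrank_pos (by rw [hrank]; norm_num)
  have hfinK : Finite K := Module.finite_of_finite F
  have : Fintype K := Fintype.ofFinite K
  set q := Fintype.card F with hq
  have hq2 : 1 < q := Fintype.one_lt_card
  have hcardK : Fintype.card K = q ^ 4 := by
    rw [Module.card_eq_pow_finrank (K := F) (V := K), hrank]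
  -- characteristic
  obtain ⟨p, hcp⟩ := CharP.exists F
  haveI : CharP F p := hcp
  obtain ⟨n, hpn, hcard⟩ := FiniteField.card F p
  haveI hpprime : Fact p.Prime := ⟨hpn⟩
  haveI : CharP K p := charP_of_injective_algebraMap hinj p
  -- Frobenius is additive
  have hFadd : ∀ x y : K, (x + y) ^ q = x ^ q + y ^ q := by
    intro x y
    rw [hq, hcard]
    exact add_pow_char_pow (R := K) (p := p) (n := n) x y
  have hfixF : ∀ t : F, (algebraMap F K t) ^ q = algebraMap F K t := by
    intro t
    rw [← map_pow, FiniteField.pow_card]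
  -- the conjugates
  set r1 : K := r with hr1
  set r2 : K := r1 ^ q with hr2
  set r3 : K := r2 ^ q with hr3
  set r4 : K := r3 ^ q with hr4
  have hr41 : r4 ^ q = r1 := by
    rw [hr4, hr3, hr2, hr1, ← pow_mul, ← pow_mul, ← pow_mul]
    have h : q * (q * (q * q)) = Fintype.card K := by rw [hcardK]; ring
    rw [h, FiniteField.pow_card]
  -- elementary symmetric functions of the conjugates
  set s1 : K := r1 + r2 + r3 + r4 with hs1
  set s2 : K := r1*r2 + r1*r3 + r1*r4 + r2*r3 + r2*r4 + r3*r4 with hs2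
  set s3 : K := r1*r2*r3 + r1*r2*r4 + r1*r3*r4 + r2*r3*r4 with hs3
  set s4 : K := r1*r2*r3*r4 with hs4
  have hfs1 : s1 ^ q = s1 := by
    rw [hs1]
    simp only [hFadd, mul_pow]
    rw [← hr2, ← hr3, ← hr4, hr41]
    ring
  have hfs2 : s2 ^ q = s2 := by
    rw [hs2]
    simp only [hFadd, mul_pow]
    rw [← hr2, ← hr3, ← hr4, hr41]
    ring
  have hfs3 : s3 ^ q = s3 := by
    rw [hs3]
    simp only [hFadd, mul_pow]
    rw [← hr2, ← hr3, ← hr4, hr41]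
    ring
  have hfs4 : s4 ^ q = s4 := by
    rw [hs4]
    simp only [hFadd, mul_pow]
    rw [← hr2, ← hr3, ← hr4, hr41]
    ring
  obtain ⟨a1, ha1⟩ := aux_fix F K s1 hfs1
  obtain ⟨a2, ha2⟩ := aux_fix F K s2 hfs2
  obtain ⟨a3, ha3⟩ := aux_fix F K s3 hfs3
  obtain ⟨a4, ha4⟩ := aux_fix F K s4 hfs4
  -- the polynomial f and the candidate g
  set f : F[X] := X^4 + C a * X^3 + C b * X^2 + C c * X + C d with hf
  set g : F[X] := X^4 - C a1 * X^3 + C a2 * X^2 - C a3 * X + C a4 with hg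
  have hmonf : f.Monic := by rw [hf]; monicity!
  have hgmon : g.Monic := by rw [hg]; monicity!
  have hdegf : f.natDegree = 4 := by rw [hf]; compute_degree!
  have hdf : f.degree = 4 := by rw [hf]; compute_degree!
  have hdg : g.degree = 4 := by rw [hg]; compute_degree!
  have hminp : f = minpoly F r := minpoly.eq_of_irreducible_of_monic hirr hr hmonf
  have hgmap : g.map (algebraMap F K) = (X - C r1) * (X - C r2) * (X - C r3) * (X - C r4) := by
    rw [hg]
    simp only [Polynomial.map_add, Polynomial.map_sub, Polynomial.map_mul, Polynomial.map_pow,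
      Polynomial.map_X, Polynomial.map_C, ha1, ha2, ha3, ha4, hs1, hs2, hs3, hs4]
    simp only [map_add, map_mul]
    ring
  have haevalg : aeval r g = 0 := by
    rw [aeval_def, ← eval_map, hgmap]
    simp [hr1]
  have hfg : f = g := by
    by_contra hne
    have hsub : aeval r (f - g) = 0 := by rw [map_sub, hr, haevalg, sub_zero]
    have hdvd : minpoly F r ∣ (f - g) := minpoly.dvd F r hsub
    have hne' : f - g ≠ 0 := sub_ne_zero.mpr hne
    have hle := Polynomial.natDegree_le_of_dvd hdvd hne'
    rw [← hminp, hdegf] at hle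
    have hlt : (f - g).degree < f.degree :=
      Polynomial.degree_sub_lt (by rw [hdf, hdg]) hmonf.ne_zero
        (by rw [hmonf.leadingCoeff, hgmon.leadingCoeff])
    rw [hdf] at hlt
    have h4 : (f - g).natDegree < 4 :=
      (Polynomial.natDegree_lt_iff_degree_lt hne').mpr (by exact_mod_cast hlt)
    omega

  -- coefficient identities
  have hco : ∀ k : ℕ, f.coeff k = g.coeff k := fun k => by rw [hfg]
  have ec3 := hco 3
  have ec2 := hco 2
  have ec1 := hco 1
  have ec0 := hco 0
  simp only [hf, hg, coeff_add, coeff_sub, coeff_C_mul, coeff_X_pow, coeff_C, coeff_X,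
    mul_ite, mul_one, mul_zero] at ec3 ec2 ec1 ec0
  norm_num at ec3 ec2 ec1 ec0
  set A := algebraMap F K a with hAdef
  set B := algebraMap F K b with hBdef
  set CC := algebraMap F K c with hCdef
  set DD := algebraMap F K d with hDdef
  have hS1 : s1 = -A := by
    rw [← ha1, hAdef, show a1 = -a from by linear_combination ec3, map_neg]
  have hS2 : s2 = B := by
    rw [← ha2, hBdef, show a2 = b from by linear_combination -ec2]
  have hS3 : s3 = -CC := by
    rw [← ha3, hCdef, show a3 = -c from by linear_combination ec1, map_neg]
  have hS4 : s4 = DD := by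
    rw [← ha4, hDdef, show a4 = d from by linear_combination -ec0]
  -- the key nonvanishing facts
  have hAne : A ≠ 0 := fun h => ha (hinj (by rw [map_zero, ← hAdef]; exact h))
  have hL1 : r1 + r2 + r3 + r4 ≠ 0 := by
    rw [← hs1, hS1]
    exact neg_ne_zero.mpr hAne
  have hL2 : r1 - r2 + r3 - r4 ≠ 0 := by
    intro hL2eq
    have hr4eq : r4 = r1 - r2 + r3 := by linear_combination -hL2eq
    have key : A ^ 3 - 4 * A * B + 8 * CC = 0 := by
      have hA' : A = -s1 := by linear_combination hS1
      have hB' : B = s2 := hS2.symm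
      have hC' : CC = -s3 := by linear_combination hS3
      rw [hA', hB', hC', hs1, hs2, hs3, hr4eq]
      ring
    have keyF : a ^ 3 - 4 * a * b + 8 * c = 0 := by
      apply hinj
      rw [map_zero]
      simp only [map_add, map_sub, map_mul, map_pow, map_ofNat]
      rw [← hAdef, ← hBdef, ← hCdef]
      linear_combination key
    exact h1 (by linear_combination (-(a ^ 3 - 4 * a * b + 8 * c)) * keyF)
  have hT : (r1 - r3) ^ 2 + (r2 - r4) ^ 2 ≠ 0 := by
    intro hTeq
    have key : A^6 - 8*B*A^4 + 4*CC*A^3 + 20*B^2*A^2 - 24*DD*A^2 - 8*B*CC*A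
        - 16*B^3 - 8*CC^2 + 64*B*DD = 0 := by
      have hA' : A = -s1 := by linear_combination hS1
      have hB' : B = s2 := hS2.symm
      have hC' : CC = -s3 := by linear_combination hS3
      have hD' : DD = s4 := hS4.symm
      rw [hA', hB', hC', hD', hs1, hs2, hs3, hs4]
      linear_combination ((((r1+r2+r3+r4)^2 - 2*(r1*r2+r1*r3+r1*r4+r2*r3+r2*r4+r3*r4))^2 + 2*((r1+r2+r3+r4)^2 - 2*(r1*r2+r1*r3+r1*r4+r2*r3+r2*r4+r3*r4))*(r1*r3+r2*r4) + 4*(r1*r3+r2*r4)^2) - 2*(r1*r2+r1*r3+r1*r4+r2*r3+r2*r4+r3*r4)*(((r1+r2+r3+r4)^2 - 2*(r1*r2+r1*r3+r1*r4+r2*r3+r2*r4+r3*r4)) + 2*(r1*r3+r2*r4)) + 4*(r1+r2+r3+r4)*(r1*r2*r3+r1*r2*r4+r1*r3*r4+r2*r3*r4) - 16*(r1*r2*r3*r4)) * hTeq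
    have keyF : a ^ 6 - 8 * b * a ^ 4 + 4 * c * a ^ 3 + 20 * b ^ 2 * a ^ 2 - 24 * d * a ^ 2 -
        8 * b * c * a - 16 * b ^ 3 - 8 * c ^ 2 + 64 * b * d = 0 := by
      apply hinj
      rw [map_zero]
      simp only [map_add, map_sub, map_mul, map_pow, map_ofNat]
      rw [← hAdef, ← hBdef, ← hCdef, ← hDdef]
      linear_combination key
    exact h2 keyF
  -- now the linear independence
  rw [Fintype.linearIndependent_iff]
  intro co hco0 i
  set C0 := algebraMap F K (co 0) with hC0def
  set C1 := algebraMap F K (co 1) with hC1def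
  set C2 := algebraMap F K (co 2) with hC2def
  set C3 := algebraMap F K (co 3) with hC3def
  have hp0 : r1 ^ q ^ 0 = r1 := by rw [pow_zero, pow_one]
  have hp1 : r1 ^ q ^ 1 = r2 := by rw [pow_one, hr2]
  have hp2' : r1 ^ q ^ 2 = r3 := by
    rw [hr3, hr2, ← pow_mul]
    congr 1
    ring
  have hp3' : r1 ^ q ^ 3 = r4 := by
    rw [hr4, hr3, hr2, ← pow_mul, ← pow_mul]
    congr 1
    ring
  have eq0 : C0 * r1 + C1 * r2 + C2 * r3 + C3 * r4 = 0 := by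
    rw [Fin.sum_univ_four] at hco0
    simp only [Fin.isValue, Fin.val_zero, Fin.val_one, Fin.val_two, Algebra.smul_def] at hco0
    rw [show ((3 : Fin 4) : ℕ) = 3 from rfl, hp0, hp1, hp2', hp3'] at hco0
    rw [← hC0def, ← hC1def, ← hC2def, ← hC3def] at hco0
    exact hco0
  have frobeq : ∀ x1 x2 x3 x4 : K, C0 * x1 + C1 * x2 + C2 * x3 + C3 * x4 = 0 →
      C0 * x1 ^ q + C1 * x2 ^ q + C2 * x3 ^ q + C3 * x4 ^ q = 0 := by
    intro x1 x2 x3 x4 h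
    have h0 : (C0 * x1 + C1 * x2 + C2 * x3 + C3 * x4) ^ q = 0 := by
      rw [h]
      exact zero_pow (by omega)
    simp only [hFadd, mul_pow] at h0
    rw [hC0def, hC1def, hC2def, hC3def] at h0 ⊢
    rw [hfixF, hfixF, hfixF, hfixF] at h0
    exact h0
  have eq1 : C0 * r2 + C1 * r3 + C2 * r4 + C3 * r1 = 0 := by
    have h := frobeq r1 r2 r3 r4 eq0
    rw [← hr2, ← hr3, ← hr4, hr41] at h
    exact h
  have eq2 : C0 * r3 + C1 * r4 + C2 * r1 + C3 * r2 = 0 := by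
    have h := frobeq r2 r3 r4 r1 eq1
    rw [← hr2, ← hr3, ← hr4, hr41] at h
    exact h
  have eq3 : C0 * r4 + C1 * r1 + C2 * r2 + C3 * r3 = 0 := by
    have h := frobeq r3 r4 r1 r2 eq2
    rw [← hr2, ← hr3, ← hr4, hr41] at h
    exact h
  set M : Matrix (Fin 4) (Fin 4) K :=
    !![r1,r2,r3,r4; r2,r3,r4,r1; r3,r4,r1,r2; r4,r1,r2,r3] with hM
  have hMv : M.mulVec ![C0,C1,C2,C3] = 0 := by
    funext j
    fin_cases j
    · show M.mulVec ![C0,C1,C2,C3] 0 = 0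
      simp [hM, Matrix.mulVec, dotProduct, Fin.sum_univ_four]
      linear_combination eq0
    · show M.mulVec ![C0,C1,C2,C3] 1 = 0
      simp [hM, Matrix.mulVec, dotProduct, Fin.sum_univ_four]
      linear_combination eq1
    · show M.mulVec ![C0,C1,C2,C3] 2 = 0
      simp [hM, Matrix.mulVec, dotProduct, Fin.sum_univ_four]
      linear_combination eq2
    · show M.mulVec ![C0,C1,C2,C3] 3 = 0
      simp [hM, Matrix.mulVec, dotProduct, Fin.sum_univ_four]
      linear_combination eq3
  have hdet : M.det = -((r1+r2+r3+r4) * (r1-r2+r3-r4) * ((r1-r3)^2 + (r2-r4)^2)) := by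
    rw [hM]
    exact det4 r1 r2 r3 r4
  have hdetne : M.det ≠ 0 := by
    rw [hdet]
    exact neg_ne_zero.mpr (mul_ne_zero (mul_ne_zero hL1 hL2) hT)
  have hv := Matrix.eq_zero_of_mulVec_eq_zero hdetne hMv
  have hz0 : C0 = 0 := by have := congrFun hv 0; simpa using this
  have hz1 : C1 = 0 := by have := congrFun hv 1; simpa using this
  have hz2 : C2 = 0 := by have := congrFun hv 2; simpa using this
  have hz3 : C3 = 0 := by have := congrFun hv 3; simpa using this
  have hco00 : co 0 = 0 := hinj (by rw [map_zero, ← hC0def]; exact hz0)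
  have hco01 : co 1 = 0 := hinj (by rw [map_zero, ← hC1def]; exact hz1)
  have hco02 : co 2 = 0 := hinj (by rw [map_zero, ← hC2def]; exact hz2)
  have hco03 : co 3 = 0 := hinj (by rw [map_zero, ← hC3def]; exact hz3)
  fin_cases i
  · exact hco00
  · exact hco01
  · exact hco02
  · exact hco03
end
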